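/- arXiv:2506.16861 — 13 statements merged into one kernel-verified Lean document; each statement's English description precedes it below -/
import Mathlib

section
/- If trace(M * M) = 0, then the partial order ≤ on Fin n is a total order (the poset is a totally ordered set). -/
open scoped Classical

/-- The matrix associated with a partial order on `Fin n`:
`M i j = 0` if `i ≤ j` and `M i j = 1` otherwise. -/
noncomputable def assocMatrix {n : ℕ} (po : PartialOrder (Fin n)) :
    Matrix (Fin n) (Fin n) ℤ :=
  Matrix.of fun i j => if po.le i j then 0 else 1

/-- If the trace of `M * M` vanishes, the order is total. -/
theorem stmt6 {n : ℕ} (po : PartialOrder (Fin n))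
    (h : Matrix.trace (assocMatrix po * assocMatrix po) = 0) :
    ∀ i j : Fin n, po.le i j ∨ po.le j i := by
  intro i j
  by_contra hc
  push_neg at hc
  obtain ⟨h1, h2⟩ := hc
  rw [Matrix.trace, Finset.sum_eq_zero_iff_of_nonneg (by
    intro k _
    rw [Matrix.diag_apply, Matrix.mul_apply]
    apply Finset.sum_nonneg
    intro l _
    simp only [assocMatrix, Matrix.of_apply]
    split <;> split <;> norm_num)] at h
  have := h i (Finset.mem_univ i)
  rw [Matrix.diag_apply, Matrix.mul_apply, Finset.sum_eq_zero_iff_of_nonneg (by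
    intro l _
    simp only [assocMatrix, Matrix.of_apply]
    split <;> split <;> norm_num)] at this
  have := this j (Finset.mem_univ j)
  simp only [assocMatrix, Matrix.of_apply, if_neg h1, if_neg h2] at this
  norm_num at this
end

section
/- Suppose the poset (Fin n, ≤) is disconnected, i.e., there exist a, b : Fin n that are not related by the reflexive-transitive closure of the comparability relation (fun x y => x ≤ y ∨ y ≤ x). Then the digraph G_X on Fin n with a directed edge from i to j whenever M i j = 1 is strongly connected: for all i, j : Fin n, Relation.ReflTransGen (fun a b => ¬(a ≤ b)) i j holds. -/
open scoped Classical

/-- If the poset is disconnected, then the digraph with an edge `i → j`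
whenever `M i j = 1`, i.e. `¬ i ≤ j`, is strongly connected. -/
theorem stmt7 {n : ℕ} (po : PartialOrder (Fin n))
    (h : ∃ a b : Fin n,
      ¬ Relation.ReflTransGen (fun x y => po.le x y ∨ po.le y x) a b) :
    ∀ i j : Fin n, Relation.ReflTransGen (fun a b => ¬ po.le a b) i j := by
  obtain ⟨a, b, hab⟩ := h
  set R := fun x y => po.le x y ∨ po.le y x with hR
  have hsymm : Symmetric (Relation.ReflTransGen R) :=
    (@Relation.ReflTransGen.stdSymm _ R ⟨fun x y h => h.symm⟩).symm
  intro i j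
  by_cases hij : po.le i j
  · -- i and j are comparably connected; pick c not connected to i
    have hc : ∃ c, ¬ Relation.ReflTransGen R i c := by
      by_contra hcon
      push_neg at hcon
      exact hab ((hsymm (hcon a)).trans (hcon b))
    obtain ⟨c, hic⟩ := hc
    have h1 : ¬ po.le i c := fun hle => hic (Relation.ReflTransGen.single (show R _ _ from Or.inl hle))
    have h2 : ¬ po.le c j := by
      intro hle
      exact hic (hsymm ((Relation.ReflTransGen.single (show R _ _ from Or.inl hle)).trans
        (Relation.ReflTransGen.single (show R _ _ from Or.inr hij))))
    exact (Relation.ReflTransGen.single h1).trans (Relation.ReflTransGen.single h2)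
  · exact Relation.ReflTransGen.single hij
end

section
/- A point i : Fin n is an up beat point if and only if there exists j : Fin n such that for all k, M i k − M j k equals −1 if k = i and 0 otherwise (rows satisfy rᵢ − rⱼ = −eᵢ). Dually, i is a down beat point if and only if there exists j such that for all k, M k i − M k j equals −1 if k = i and 0 otherwise (columns satisfy cᵢ − cⱼ = −eᵢ). -/
open scoped Classical

lemma ite_sub_neg_one (P Q : Prop) [Decidable P] [Decidable Q] :
    ((if P then (0:ℤ) else 1) - (if Q then 0 else 1) = -1) ↔ (P ∧ ¬Q) := by
  split_ifs with h1 h2 <;> simp [h1, *]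

lemma ite_sub_zero (P Q : Prop) [Decidable P] [Decidable Q] :
    ((if P then (0:ℤ) else 1) - (if Q then 0 else 1) = 0) ↔ (P ↔ Q) := by
  split_ifs with h1 h2 <;> simp [h1, *]

/-- Characterisation of up and down beat points via rows and columns of the
associated matrix. -/
theorem stmt8 {n : ℕ} (po : PartialOrder (Fin n)) (i : Fin n) :
    ((∃ j, po.lt i j ∧ ∀ k, po.lt i k → po.le j k) ↔
        ∃ j, ∀ k, assocMatrix po i k - assocMatrix po j k =
          if k = i then -1 else 0) ∧
      ((∃ j, po.lt j i ∧ ∀ k, po.lt k i → po.le k j) ↔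
        ∃ j, ∀ k, assocMatrix po k i - assocMatrix po k j =
          if k = i then -1 else 0) := by
  have hm : ∀ a b, assocMatrix po a b = if po.le a b then 0 else 1 := fun a b => rfl
  have hlt : ∀ a b, po.lt a b ↔ po.le a b ∧ ¬ po.le b a := fun a b => po.lt_iff_le_not_ge a b
  constructor
  · constructor
    · rintro ⟨j, hij, hmin⟩
      obtain ⟨hij1, hij2⟩ := (hlt i j).mp hij
      refine ⟨j, fun k => ?_⟩
      rw [hm, hm]
      by_cases hk : k = i
      · subst hk
        rw [if_pos rfl, ite_sub_neg_one]
        exact ⟨po.le_refl k, hij2⟩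
      · rw [if_neg hk, ite_sub_zero]
        constructor
        · intro h1
          exact hmin k ((hlt i k).mpr ⟨h1, fun h => hk (po.le_antisymm k i h h1)⟩)
        · intro h2
          exact hij1.trans h2
    · rintro ⟨j, hj⟩
      have h0 := hj i
      rw [hm, hm, if_pos rfl, ite_sub_neg_one] at h0
      have hji : ¬ po.le j i := fun h => h0.2 h
      have hij : po.le i j := by
        have h1 := hj j
        have hne : j ≠ i := fun h => hji (h ▸ po.le_refl i)
        rw [hm, hm, if_neg hne, ite_sub_zero] at h1
        exact h1.mpr (po.le_refl j)
      refine ⟨j, (hlt i j).mpr ⟨hij, hji⟩, fun k hk => ?_⟩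
      obtain ⟨hk1, hk2⟩ := (hlt i k).mp hk
      have hne : k ≠ i := fun h => hk2 (h ▸ po.le_refl i)
      have h1 := hj k
      rw [hm, hm, if_neg hne, ite_sub_zero] at h1
      exact h1.mp hk1
  · constructor
    · rintro ⟨j, hij, hmax⟩
      obtain ⟨hij1, hij2⟩ := (hlt j i).mp hij
      refine ⟨j, fun k => ?_⟩
      rw [hm, hm]
      by_cases hk : k = i
      · subst hk
        rw [if_pos rfl, ite_sub_neg_one]
        exact ⟨po.le_refl k, hij2⟩
      · rw [if_neg hk, ite_sub_zero]
        constructor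
        · intro h1
          exact hmax k ((hlt k i).mpr ⟨h1, fun h => hk (po.le_antisymm k i h1 h)⟩)
        · intro h2
          exact h2.trans hij1
    · rintro ⟨j, hj⟩
      have h0 := hj i
      rw [hm, hm, if_pos rfl, ite_sub_neg_one] at h0
      have hij : ¬ po.le i j := fun h => h0.2 h
      have hji : po.le j i := by
        have h1 := hj j
        have hne : j ≠ i := fun h => hij (h ▸ po.le_refl i)
        rw [hm, hm, if_neg hne, ite_sub_zero] at h1
        exact h1.mpr (po.le_refl j)
      refine ⟨j, (hlt j i).mpr ⟨hji, hij⟩, fun k hk => ?_⟩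
      obtain ⟨hk1, hk2⟩ := (hlt k i).mp hk
      have hne : k ≠ i := fun h => hk2 (h ▸ po.le_refl i)
      have h1 := hj k
      rw [hm, hm, if_neg hne, ite_sub_zero] at h1
      exact h1.mp hk1
end

section
/- If i : Fin n is a beat point of the poset (Fin n, ≤), then det M = − det (M∖i), where M∖i is the matrix obtained from M by deleting row i and column i. -/
open scoped Classical

/-- `i` is a beat point: an up beat point (the set of points strictly above `i`
has a least element) or a down beat point (the set of points strictly below `i`
has a greatest element). -/
def IsBeatPoint {n : ℕ} (po : PartialOrder (Fin n)) (i : Fin n) : Prop :=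
  (∃ j, po.lt i j ∧ ∀ k, po.lt i k → po.le j k) ∨
    (∃ j, po.lt j i ∧ ∀ k, po.lt k i → po.le k j)

/-- Auxiliary: if row `i` of `A` is `-1` at `(i,i)` and `0` elsewhere,
the determinant is minus the `(i,i)` minor. -/
theorem aux_det_row {n : ℕ} (A : Matrix (Fin (n + 1)) (Fin (n + 1)) ℤ) (i : Fin (n + 1))
    (hrow : ∀ k, A i k = if k = i then -1 else 0) :
    A.det = - (A.submatrix i.succAbove i.succAbove).det := by
  rw [Matrix.det_succ_row A i]
  rw [Finset.sum_eq_single i]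
  · rw [hrow i, if_pos rfl]
    have : ((-1 : ℤ)) ^ ((i : ℕ) + i) = 1 := Even.neg_one_pow ⟨i, rfl⟩
    rw [this]; ring
  · intro k _ hk
    rw [hrow k, if_neg hk]; ring
  · intro hi; exact absurd (Finset.mem_univ i) hi

/-- Removing a beat point changes the sign of the determinant. -/
theorem stmt9 {n : ℕ} (po : PartialOrder (Fin (n + 1))) (i : Fin (n + 1))
    (h : IsBeatPoint po i) :
    (assocMatrix po).det =
      - ((assocMatrix po).submatrix i.succAbove i.succAbove).det := by
  set M := assocMatrix po with hM
  have hMapp : ∀ a b, M a b = if po.le a b then 0 else 1 := fun a b => rfl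
  have hlt : ∀ {a b : Fin (n + 1)}, po.lt a b → po.le a b ∧ ¬ po.le b a :=
    fun {a b} hab => (po.lt_iff_le_not_ge a b).mp hab
  have hltne : ∀ {a b : Fin (n + 1)}, po.lt a b → a ≠ b := by
    intro a b hab heq
    subst heq
    exact (hlt hab).2 (po.le_refl a)
  rcases h with ⟨j, hij, hleast⟩ | ⟨j, hji, hgreat⟩
  · -- up beat point: row operation row i ← row i − row j
    have hne : i ≠ j := hltne hij
    set A : Matrix (Fin (n + 1)) (Fin (n + 1)) ℤ :=
      M.updateRow i (M i + (-1 : ℤ) • M j) with hA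
    have hdet : A.det = M.det := Matrix.det_updateRow_add_smul_self M hne (-1)
    have hrow : ∀ k, A i k = if k = i then -1 else 0 := by
      intro k
      have h1 : A i k = M i k - M j k := by
        simp [hA, Matrix.updateRow_self, sub_eq_add_neg]
      rw [h1, hMapp, hMapp]
      by_cases hk : k = i
      · subst hk
        rw [if_pos rfl, if_pos (po.le_refl k), if_neg (hlt hij).2]; norm_num
      · rw [if_neg hk]
        by_cases hik : po.le i k
        · have hlt2 : po.lt i k := (po.lt_iff_le_not_ge i k).mpr
            ⟨hik, fun hki => hk (po.le_antisymm k i hki hik)⟩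
          rw [if_pos hik, if_pos (hleast k hlt2)]; ring
        · have : ¬ po.le j k := fun hjk => hik (po.le_trans _ _ _ (hlt hij).1 hjk)
          rw [if_neg hik, if_neg this]; ring
    have hsub : A.submatrix i.succAbove i.succAbove =
        M.submatrix i.succAbove i.succAbove := by
      ext a b
      simp [hA, Matrix.submatrix_apply, Matrix.updateRow_ne (Fin.succAbove_ne i a)]
    rw [← hdet, aux_det_row A i hrow, hsub]
  · -- down beat point: column operation col i ← col i − col j
    have hne : i ≠ j := (hltne hji).symm
    set A : Matrix (Fin (n + 1)) (Fin (n + 1)) ℤ :=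
      M.updateCol i (fun k => M k i + (-1 : ℤ) • M k j) with hA
    have hdet : A.det = M.det := Matrix.det_updateCol_add_smul_self M hne (-1)
    have hcol : ∀ k, A k i = if k = i then -1 else 0 := by
      intro k
      have h1 : A k i = M k i - M k j := by
        simp [hA, Matrix.updateCol_self, sub_eq_add_neg]
      rw [h1, hMapp, hMapp]
      by_cases hk : k = i
      · subst hk
        rw [if_pos rfl, if_pos (po.le_refl k), if_neg (hlt hji).2]; norm_num
      · rw [if_neg hk]
        by_cases hik : po.le k i
        · have hlt2 : po.lt k i := (po.lt_iff_le_not_ge k i).mpr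
            ⟨hik, fun hki => hk (po.le_antisymm k i hik hki)⟩
          rw [if_pos hik, if_pos (hgreat k hlt2)]; ring
        · have : ¬ po.le k j := fun hkj => hik (po.le_trans _ _ _ hkj (hlt hji).1)
          rw [if_neg hik, if_neg this]; ring
    have hsub : A.submatrix i.succAbove i.succAbove =
        M.submatrix i.succAbove i.succAbove := by
      ext a b
      simp [hA, Matrix.submatrix_apply, Matrix.updateCol_ne (Fin.succAbove_ne i b)]
    have hrowT : ∀ k, A.transpose i k = if k = i then -1 else 0 := fun k => hcol k
    have h2 := aux_det_row A.transpose i hrowT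
    rw [Matrix.det_transpose] at h2
    rw [← hdet, h2, ← Matrix.transpose_submatrix, Matrix.det_transpose, hsub]
end

section
/- If i : Fin n is a beat point of the poset (Fin n, ≤), then rank M = rank (M∖i) + 1, where M∖i is the matrix obtained from M by deleting row i and column i. Consequently, the quantity n − rank M is unchanged when a beat point is removed, so it is a homotopy invariant of the finite T₀-space. -/
open scoped Classical

section Aux

open Matrix

theorem myAux_range_prodMap {R : Type*} [Semiring R] {M N M' N' : Type*}
    [AddCommMonoid M] [AddCommMonoid N] [AddCommMonoid M'] [AddCommMonoid N']
    [Module R M] [Module R N] [Module R M'] [Module R N']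
    (f : M →ₗ[R] M') (g : N →ₗ[R] N') :
    LinearMap.range (f.prodMap g) = (LinearMap.range f).prod (LinearMap.range g) := by
  ext x
  constructor
  · rintro ⟨y, rfl⟩; exact ⟨⟨y.1, rfl⟩, ⟨y.2, rfl⟩⟩
  · rintro ⟨⟨a, ha⟩, ⟨b, hb⟩⟩; exact ⟨(a, b), Prod.ext ha hb⟩

def myAuxSubmoduleProdEquiv {R M N : Type*} [Semiring R] [AddCommMonoid M] [AddCommMonoid N]
    [Module R M] [Module R N] (p : Submodule R M) (q : Submodule R N) :
    ↥(p.prod q) ≃ₗ[R] p × q where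
  toFun x := (⟨x.1.1, x.2.1⟩, ⟨x.1.2, x.2.2⟩)
  map_add' _ _ := rfl
  map_smul' _ _ := rfl
  invFun x := ⟨(x.1.1, x.2.1), ⟨x.1.2, x.2.2⟩⟩
  left_inv _ := rfl
  right_inv _ := rfl

theorem myAux_rank_fromBlocks {α β : Type*} [Fintype α] [Fintype β] [DecidableEq α]
    [DecidableEq β] (A : Matrix α α ℤ) (D : Matrix β β ℤ) :
    (Matrix.fromBlocks A 0 0 D).rank = A.rank + D.rank := by
  classical
  set e := LinearEquiv.sumArrowLequivProdArrow α β ℤ ℤ with he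
  have key : (Matrix.fromBlocks A 0 0 D).mulVecLin
      = e.symm.toLinearMap ∘ₗ (A.mulVecLin.prodMap D.mulVecLin) ∘ₗ e.toLinearMap := by
    apply LinearMap.ext; intro x; funext k
    cases k with
    | inl a =>
      simp [he, Matrix.mulVecLin_apply, Matrix.mulVec, dotProduct,
        Fintype.sum_sum_type, Matrix.fromBlocks, LinearEquiv.sumArrowLequivProdArrow]
    | inr b =>
      simp [he, Matrix.mulVecLin_apply, Matrix.mulVec, dotProduct,
        Fintype.sum_sum_type, Matrix.fromBlocks, LinearEquiv.sumArrowLequivProdArrow]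
  rw [Matrix.rank, key, LinearMap.range_comp,
    LinearMap.range_comp_of_range_eq_top _ (LinearEquiv.range e),
    LinearEquiv.finrank_map_eq, myAux_range_prodMap,
    (myAuxSubmoduleProdEquiv _ _).finrank_eq]
  haveI h1 : Module.Finite ℤ ↥(LinearMap.range A.mulVecLin) :=
    Module.Finite.iff_fg.mpr (IsNoetherian.noetherian _)
  haveI h2 : Module.Finite ℤ ↥(LinearMap.range D.mulVecLin) :=
    Module.Finite.iff_fg.mpr (IsNoetherian.noetherian _)
  rw [Module.finrank_prod]
  rfl

theorem myAux_rank_pivot {n : ℕ} (N : Matrix (Fin (n + 1)) (Fin (n + 1)) ℤ) (i : Fin (n + 1))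
    (hii : IsUnit (N i i)) (hrow : ∀ k, k ≠ i → N i k = 0) (hcol : ∀ k, k ≠ i → N k i = 0) :
    N.rank = (N.submatrix i.succAbove i.succAbove).rank + 1 := by
  classical
  let e : Fin n ⊕ PUnit.{1} ≃ Fin (n + 1) :=
    { toFun := Sum.elim i.succAbove fun _ => i
      invFun := fun k => (finSuccEquiv' i k).elim (Sum.inr PUnit.unit) Sum.inl
      left_inv := by
        rintro (j | ⟨⟩) <;> simp [finSuccEquiv'_succAbove, finSuccEquiv'_at]
      right_inv := by
        intro k
        rcases eq_or_ne k i with rfl | hk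
        · simp [finSuccEquiv'_at]
        · obtain ⟨j, rfl⟩ := Fin.exists_succAbove_eq hk
          simp [finSuccEquiv'_succAbove] }
  have hsub : N.submatrix ⇑e ⇑e
      = fromBlocks (N.submatrix i.succAbove i.succAbove) 0 0 (Matrix.of fun _ _ => N i i) := by
    ext (k | k) (l | l) <;>
      simp [e, Fin.succAbove_ne, hrow, hcol, Fin.succAbove_ne i _]
  have hD : (Matrix.of fun _ _ => N i i : Matrix PUnit.{1} PUnit.{1} ℤ).rank = 1 := by
    have : IsUnit (Matrix.of fun _ _ => N i i : Matrix PUnit.{1} PUnit.{1} ℤ) := by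
      rw [Matrix.isUnit_iff_isUnit_det, Matrix.det_unique]
      exact hii
    rw [Matrix.rank_of_isUnit _ this]
    rfl
  have := Matrix.rank_submatrix N e e
  rw [hsub, myAux_rank_fromBlocks, hD] at this
  omega

theorem myAux_isUnit_one_add {α : Type*} [Fintype α] [DecidableEq α] (X : Matrix α α ℤ)
    (h : X * X = 0) : IsUnit ((1 : Matrix α α ℤ) + X) :=
  ⟨⟨1 + X, 1 - X,
    by rw [mul_sub, mul_one, add_mul, one_mul, h, add_zero, add_sub_cancel_right],
    by rw [sub_mul, one_mul, mul_add, mul_one, h, add_zero, add_sub_cancel_right]⟩, rfl⟩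

/-- Up beat point case: row `i` agrees with row `j` off the diagonal column. -/
theorem myAux_rank_row_rel {n : ℕ} (M : Matrix (Fin (n + 1)) (Fin (n + 1)) ℤ)
    (i j : Fin (n + 1)) (hji : j ≠ i)
    (hrow : ∀ k, k ≠ i → M i k = M j k) (hMii : M i i = 0) (hMji : M j i = 1) :
    M.rank = (M.submatrix i.succAbove i.succAbove).rank + 1 := by
  classical
  set X := Matrix.single i j (-1 : ℤ) with hX
  have hXX : X * X = 0 := Matrix.single_mul_single_of_ne (-1) i j i hji (-1)
  set M1 := (1 + X) * M with hM1d
  have hM1i : ∀ l, M1 i l = M i l - M j l := by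
    intro l
    rw [hM1d, Matrix.add_mul, Matrix.one_mul, hX]
    simp [sub_eq_add_neg]
  have hM1o : ∀ k l, k ≠ i → M1 k l = M k l := by
    intro k l hk
    rw [hM1d, Matrix.add_mul, Matrix.one_mul, hX]
    simp [Matrix.single_mul_apply_of_ne _ _ _ _ _ hk]
  set v : Fin (n + 1) → ℤ := fun k => if k = i then 0 else M k i with hv
  set C : Matrix (Fin (n + 1)) (Fin (n + 1)) ℤ := Matrix.of fun k l => if l = i then v k else 0
    with hC
  have hCC : C * C = 0 := by
    ext k l
    simp only [Matrix.mul_apply, hC, Matrix.of_apply, Matrix.zero_apply]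
    apply Finset.sum_eq_zero
    intro m _
    by_cases hmi : m = i
    · simp [hmi, hv]
    · simp [hmi]
  set N := (1 + C) * M1 with hNd
  have hNval : ∀ k l, N k l = M1 k l + v k * M1 i l := by
    intro k l
    rw [hNd, Matrix.add_mul, Matrix.one_mul]
    simp [hC, Matrix.mul_apply, ite_mul, zero_mul, Finset.sum_ite_eq']
  have hNii : N i i = -1 := by
    rw [hNval, hM1i, hMii, hMji, hv]
    simp
  have hNrow : ∀ k, k ≠ i → N i k = 0 := by
    intro k hk
    rw [hNval, hM1i, hrow k hk, hv]
    simp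
  have hNcol : ∀ k, k ≠ i → N k i = 0 := by
    intro k hk
    rw [hNval, hM1o k i hk, hM1i, hMii, hMji, hv]
    simp [hk]
  have hNsub : ∀ k l, k ≠ i → l ≠ i → N k l = M k l := by
    intro k l hk hl
    rw [hNval, hM1o k l hk, hM1i, hrow l hl, hv]
    simp [hk]
  have hrank : N.rank = M.rank := by
    rw [hNd, hM1d]
    rw [Matrix.rank_mul_eq_right_of_isUnit_det _ _
      ((Matrix.isUnit_iff_isUnit_det _).mp (myAux_isUnit_one_add C hCC))]
    rw [Matrix.rank_mul_eq_right_of_isUnit_det _ _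
      ((Matrix.isUnit_iff_isUnit_det _).mp (myAux_isUnit_one_add X hXX))]
  have hpivot := myAux_rank_pivot N i (by rw [hNii]; exact isUnit_one.neg) hNrow hNcol
  have hsubeq : N.submatrix i.succAbove i.succAbove = M.submatrix i.succAbove i.succAbove := by
    ext a b
    exact hNsub _ _ (Fin.succAbove_ne i a) (Fin.succAbove_ne i b)
  rw [← hrank, hpivot, hsubeq]

/-- Down beat point case: column `i` agrees with column `j` off the diagonal row. -/
theorem myAux_rank_col_rel {n : ℕ} (M : Matrix (Fin (n + 1)) (Fin (n + 1)) ℤ)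
    (i j : Fin (n + 1)) (hji : j ≠ i)
    (hcol : ∀ k, k ≠ i → M k i = M k j) (hMii : M i i = 0) (hMij : M i j = 1) :
    M.rank = (M.submatrix i.succAbove i.succAbove).rank + 1 := by
  classical
  set Y := Matrix.single j i (-1 : ℤ) with hY
  have hYY : Y * Y = 0 := Matrix.single_mul_single_of_ne (-1) j i j (Ne.symm hji) (-1)
  set M1 := M * (1 + Y) with hM1d
  have hM1i : ∀ k, M1 k i = M k i - M k j := by
    intro k
    rw [hM1d, Matrix.mul_add, Matrix.mul_one, hY]
    simp [sub_eq_add_neg, mul_comm]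
  have hM1o : ∀ k l, l ≠ i → M1 k l = M k l := by
    intro k l hl
    rw [hM1d, Matrix.mul_add, Matrix.mul_one, hY]
    simp [Matrix.mul_single_apply_of_ne _ _ _ _ _ hl]
  set w : Fin (n + 1) → ℤ := fun l => if l = i then 0 else M i l with hw
  set C : Matrix (Fin (n + 1)) (Fin (n + 1)) ℤ := Matrix.of fun k l => if k = i then w l else 0
    with hC
  have hCC : C * C = 0 := by
    ext k l
    simp only [Matrix.mul_apply, hC, Matrix.of_apply, Matrix.zero_apply]
    apply Finset.sum_eq_zero
    intro m _
    by_cases hmi : m = i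
    · simp [hmi, hw]
    · simp [hmi]
  set N := M1 * (1 + C) with hNd
  have hNval : ∀ k l, N k l = M1 k l + M1 k i * w l := by
    intro k l
    rw [hNd, Matrix.mul_add, Matrix.mul_one]
    simp [hC, Matrix.mul_apply, mul_ite, mul_zero, Finset.sum_ite_eq]
  have hNii : N i i = -1 := by
    rw [hNval, hM1i, hMii, hMij, hw]
    simp
  have hNcol : ∀ k, k ≠ i → N k i = 0 := by
    intro k hk
    rw [hNval, hM1i, hcol k hk, hw]
    simp
  have hNrow : ∀ l, l ≠ i → N i l = 0 := by
    intro l hl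
    rw [hNval, hM1o i l hl, hM1i, hMii, hMij, hw]
    simp [hl]
  have hNsub : ∀ k l, k ≠ i → l ≠ i → N k l = M k l := by
    intro k l hk hl
    rw [hNval, hM1o k l hl, hM1i, hcol k hk, hw]
    simp [hl]
  have hrank : N.rank = M.rank := by
    rw [hNd, hM1d]
    rw [Matrix.rank_mul_eq_left_of_isUnit_det _ _
      ((Matrix.isUnit_iff_isUnit_det _).mp (myAux_isUnit_one_add C hCC))]
    rw [Matrix.rank_mul_eq_left_of_isUnit_det _ _
      ((Matrix.isUnit_iff_isUnit_det _).mp (myAux_isUnit_one_add Y hYY))]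
  have hpivot := myAux_rank_pivot N i (by rw [hNii]; exact isUnit_one.neg) hNrow hNcol
  have hsubeq : N.submatrix i.succAbove i.succAbove = M.submatrix i.succAbove i.succAbove := by
    ext a b
    exact hNsub _ _ (Fin.succAbove_ne i a) (Fin.succAbove_ne i b)
  rw [← hrank, hpivot, hsubeq]

end Aux

/-- Removing a beat point decreases the rank by exactly one; hence the
difference between the size of the space and the rank is unchanged. -/
theorem stmt10 {n : ℕ} (po : PartialOrder (Fin (n + 1))) (i : Fin (n + 1))
    (h : IsBeatPoint po i) :
    (assocMatrix po).rank =
        ((assocMatrix po).submatrix i.succAbove i.succAbove).rank + 1 ∧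
      (n + 1) - (assocMatrix po).rank =
        n - ((assocMatrix po).submatrix i.succAbove i.succAbove).rank := by
  have main : (assocMatrix po).rank =
      ((assocMatrix po).submatrix i.succAbove i.succAbove).rank + 1 := by
    rcases h with ⟨j, hij, hleast⟩ | ⟨j, hji, hgreat⟩
    · -- up beat point
      obtain ⟨hle, hnle⟩ := (po.lt_iff_le_not_ge i j).mp hij
      have hjine : j ≠ i := fun hh => hnle (hh ▸ po.le_refl i)
      apply myAux_rank_row_rel _ i j hjine
      · intro k hk
        have key : po.le i k ↔ po.le j k := by
          constructor
          · intro hik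
            exact hleast k ((po.lt_iff_le_not_ge i k).mpr
              ⟨hik, fun hki => hk (po.le_antisymm k i hki hik)⟩)
          · intro hjk
            exact po.le_trans i j k hle hjk
        simp [assocMatrix, key]
      · simp [assocMatrix, po.le_refl]
      · simp [assocMatrix, hnle]
    · -- down beat point
      obtain ⟨hle, hnle⟩ := (po.lt_iff_le_not_ge j i).mp hji
      have hjine : j ≠ i := fun hh => hnle (hh ▸ po.le_refl i)
      apply myAux_rank_col_rel _ i j hjine
      · intro k hk
        have key : po.le k i ↔ po.le k j := by
          constructor
          · intro hki
            exact hgreat k ((po.lt_iff_le_not_ge k i).mpr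
              ⟨hki, fun hik => hk (po.le_antisymm k i hki hik)⟩)
          · intro hkj
            exact po.le_trans k j i hkj hle
        simp [assocMatrix, key]
      · simp [assocMatrix, po.le_refl]
      · simp [assocMatrix, hnle]
  exact ⟨main, by omega⟩
end

section
/- If the poset (Fin n, ≤) is dismantlable (equivalently, the associated finite T₀-space is contractible), then det M = 0. -/
open scoped Classical

/-- `x` is a beat point of the induced subposet on the finite set `s`. -/
def IsBeatPointIn {n : ℕ} (po : PartialOrder (Fin n)) (s : Finset (Fin n))
    (x : Fin n) : Prop :=
  (∃ y ∈ s, po.lt x y ∧ ∀ z ∈ s, po.lt x z → po.le y z) ∨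
    (∃ y ∈ s, po.lt y x ∧ ∀ z ∈ s, po.lt z x → po.le z y)

/-- A finite (sub)poset is dismantlable if it can be reduced to a single point
by successively removing beat points of the remaining induced subposet.
By Stong's theorem this is equivalent to contractibility of the associated
finite space. -/
inductive Dismantlable {n : ℕ} (po : PartialOrder (Fin n)) :
    Finset (Fin n) → Prop
  | single (x : Fin n) : Dismantlable po {x}
  | step (s : Finset (Fin n)) (x : Fin n) (hx : x ∈ s)
      (hbeat : IsBeatPointIn po s x)
      (h : Dismantlable po (s.erase x)) : Dismantlable po s

/-- If a row is supported on the diagonal, the determinant factors. -/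
lemma det_aux {α : Type*} [DecidableEq α] [Fintype α] (A : Matrix α α ℤ) (x : α)
    (hrow : ∀ j, j ≠ x → A x j = 0) :
    A.det = A x x * (A.submatrix (fun j : {j // j ≠ x} => (j : α)) (fun j : {j // j ≠ x} => (j : α))).det := by
  have h := Matrix.twoBlockTriangular_det' A (fun i => i = x) ?_
  · rw [h]
    congr 1
    exact Matrix.det_toSquareBlock_id A x
  · rintro i rfl j hj
    exact hrow j hj

/-- Row-operation step: if row `x` equals row `y` except at column `x`. -/
lemma step_aux {α : Type*} [DecidableEq α] [Fintype α] (A : Matrix α α ℤ) (x y : α)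
    (hne : x ≠ y) (h0 : ∀ j, j ≠ x → A x j = A y j) (h1 : A x x = 0) (h2 : A y x = 1) :
    A.det = -(A.submatrix (fun j : {j // j ≠ x} => (j : α)) (fun j : {j // j ≠ x} => (j : α))).det := by
  set B := A.updateRow x (A x + (-1 : ℤ) • A y) with hB
  have hdet : B.det = A.det := Matrix.det_updateRow_add_smul_self A hne (-1)
  have hBrow : ∀ j, j ≠ x → B x j = 0 := by
    intro j hj
    simp only [hB, Matrix.updateRow_self, Pi.add_apply, Pi.smul_apply, smul_eq_mul,
      neg_one_mul]
    rw [h0 j hj]; ring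
  have hBxx : B x x = -1 := by
    simp only [hB, Matrix.updateRow_self, Pi.add_apply, Pi.smul_apply, smul_eq_mul,
      neg_one_mul, h1, h2]; ring
  have hsub : B.submatrix (fun j : {j // j ≠ x} => (j : α)) (fun j : {j // j ≠ x} => (j : α))
      = A.submatrix (fun j : {j // j ≠ x} => (j : α)) (fun j : {j // j ≠ x} => (j : α)) := by
    ext i j
    simp only [Matrix.submatrix_apply, hB]
    rw [Matrix.updateRow_ne (by exact_mod_cast i.2)]
  rw [← hdet, det_aux B x hBrow, hBxx, hsub]; ring

lemma key {n : ℕ} (po : PartialOrder (Fin n)) (s : Finset (Fin n))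
    (h : Dismantlable po s) :
    ((assocMatrix po).submatrix (fun i : ↥s => (i : Fin n)) (fun i : ↥s => (i : Fin n))).det = 0 := by
  induction h with
  | single x =>
    have hmat : ((assocMatrix po).submatrix (fun i : ↥({x} : Finset (Fin n)) => (i : Fin n))
        (fun i : ↥({x} : Finset (Fin n)) => (i : Fin n))) = 0 := by
      ext a b
      have ha : (a : Fin n) = x := Finset.mem_singleton.mp a.2
      have hb : (b : Fin n) = x := Finset.mem_singleton.mp b.2
      simp [assocMatrix, ha, hb, po.le_refl]
    rw [hmat]
    exact @Matrix.det_zero _ _ _ _ _ ⟨⟨x, Finset.mem_singleton_self x⟩⟩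
  | step s x hx hbeat hd ih =>
    set M := assocMatrix po with hM
    set A := M.submatrix (fun i : ↥s => (i : Fin n)) (fun i : ↥s => (i : Fin n)) with hA
    -- equivalence between the erased subtype and {j : ↥s // j ≠ ⟨x, hx⟩}
    have key_equiv : ∀ (C : Matrix (Fin n) (Fin n) ℤ),
        ((C.submatrix (fun i : ↥s => (i : Fin n)) (fun i : ↥s => (i : Fin n))).submatrix
          (fun j : {j : ↥s // j ≠ ⟨x, hx⟩} => (j : ↥s)) (fun j : {j : ↥s // j ≠ ⟨x, hx⟩} => (j : ↥s))).det
        = (C.submatrix (fun i : ↥(s.erase x) => (i : Fin n)) (fun i : ↥(s.erase x) => (i : Fin n))).det := by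
      intro C
      let e : ↥(s.erase x) ≃ {j : ↥s // j ≠ ⟨x, hx⟩} :=
        { toFun := fun a => ⟨⟨a.1, Finset.mem_of_mem_erase a.2⟩, by
            intro hcontra
            exact (Finset.mem_erase.mp a.2).1 (congrArg Subtype.val hcontra)⟩
          invFun := fun b => ⟨b.1.1, Finset.mem_erase.mpr ⟨fun hc => b.2 (Subtype.ext hc), b.1.2⟩⟩
          left_inv := fun a => rfl
          right_inv := fun b => rfl }
      have heq : ((C.submatrix (fun i : ↥s => (i : Fin n)) (fun i : ↥s => (i : Fin n))).submatrix
          (fun j : {j : ↥s // j ≠ ⟨x, hx⟩} => (j : ↥s)) (fun j : {j : ↥s // j ≠ ⟨x, hx⟩} => (j : ↥s)))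
          = (C.submatrix (fun i : ↥(s.erase x) => (i : Fin n)) (fun i : ↥(s.erase x) => (i : Fin n))).submatrix e.symm e.symm := rfl
      rw [heq, Matrix.det_submatrix_equiv_self]
    have hxlt : ∀ a b : Fin n, po.lt a b → ¬ po.le b a := by
      intro a b hab
      exact (po.lt_iff_le_not_ge a b).mp hab |>.2
    rcases hbeat with ⟨y, hy, hlt, hmin⟩ | ⟨y, hy, hlt, hmax⟩
    · -- up beat point
      have hne : (⟨x, hx⟩ : ↥s) ≠ ⟨y, hy⟩ := by
        intro hc
        have : x = y := congrArg Subtype.val hc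
        exact (hxlt x y hlt) (this ▸ po.le_refl x)
      have h0 : ∀ j : ↥s, j ≠ ⟨x, hx⟩ → A ⟨x, hx⟩ j = A ⟨y, hy⟩ j := by
        intro j hj
        have hjx : (j : Fin n) ≠ x := fun hc => hj (Subtype.ext hc)
        simp only [hA, Matrix.submatrix_apply, hM, assocMatrix, Matrix.of_apply]
        by_cases hxj : po.le x (j : Fin n)
        · have hlt' : po.lt x (j : Fin n) := (po.lt_iff_le_not_ge x j).mpr
            ⟨hxj, fun hc => hjx (po.le_antisymm _ _ hc hxj)⟩
          have : po.le y (j : Fin n) := hmin j j.2 hlt'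
          simp [hxj, this]
        · have hxy := ((po.lt_iff_le_not_ge x y).mp hlt).1
          have : ¬ po.le y (j : Fin n) := fun hc => hxj (po.le_trans _ _ _ hxy hc)
          simp [hxj, this]
      have h1 : A ⟨x, hx⟩ ⟨x, hx⟩ = 0 := by
        simp [hA, hM, assocMatrix, po.le_refl]
      have h2 : A ⟨y, hy⟩ ⟨x, hx⟩ = 1 := by
        have : ¬ po.le y x := hxlt x y hlt
        simp [hA, hM, assocMatrix, this]
      rw [step_aux A ⟨x, hx⟩ ⟨y, hy⟩ hne h0 h1 h2, key_equiv M, ih]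
      ring
    · -- down beat point: work with the transpose
      rw [← Matrix.det_transpose]
      have hAT : A.transpose = (M.transpose).submatrix (fun i : ↥s => (i : Fin n)) (fun i : ↥s => (i : Fin n)) := rfl
      rw [hAT]
      set A' := (M.transpose).submatrix (fun i : ↥s => (i : Fin n)) (fun i : ↥s => (i : Fin n)) with hA'
      have hne : (⟨x, hx⟩ : ↥s) ≠ ⟨y, hy⟩ := by
        intro hc
        have : x = y := congrArg Subtype.val hc
        exact (hxlt y x hlt) (this ▸ po.le_refl x)
      have h0 : ∀ j : ↥s, j ≠ ⟨x, hx⟩ → A' ⟨x, hx⟩ j = A' ⟨y, hy⟩ j := by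
        intro j hj
        have hjx : (j : Fin n) ≠ x := fun hc => hj (Subtype.ext hc)
        simp only [hA', Matrix.submatrix_apply, Matrix.transpose_apply, hM, assocMatrix, Matrix.of_apply]
        by_cases hjxle : po.le (j : Fin n) x
        · have hlt' : po.lt (j : Fin n) x := (po.lt_iff_le_not_ge _ _).mpr
            ⟨hjxle, fun hc => hjx (po.le_antisymm _ _ hjxle hc)⟩
          have : po.le (j : Fin n) y := hmax j j.2 hlt'
          simp [hjxle, this]
        · have : ¬ po.le (j : Fin n) y := fun hc => hjxle (po.le_trans _ _ _ hc ((po.lt_iff_le_not_ge y x).mp hlt).1)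
          simp [hjxle, this]
      have h1 : A' ⟨x, hx⟩ ⟨x, hx⟩ = 0 := by
        simp [hA', hM, assocMatrix, po.le_refl]
      have h2 : A' ⟨y, hy⟩ ⟨x, hx⟩ = 1 := by
        have : ¬ po.le x y := hxlt y x hlt
        simp [hA', hM, assocMatrix, this]
      have htr : ((M.transpose).submatrix (fun j : ↥(s.erase x) => (j : Fin n)) (fun j : ↥(s.erase x) => (j : Fin n))).det
          = (M.submatrix (fun j : ↥(s.erase x) => (j : Fin n)) (fun j : ↥(s.erase x) => (j : Fin n))).det := by
        rw [← Matrix.det_transpose (M.submatrix _ _)]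
        rfl
      rw [step_aux A' ⟨x, hx⟩ ⟨y, hy⟩ hne h0 h1 h2, key_equiv M.transpose, htr, ih]
      ring


/-- If the poset is dismantlable (equivalently, the associated finite
`T₀`-space is contractible), then the determinant of its matrix vanishes. -/
theorem stmt11 {n : ℕ} (po : PartialOrder (Fin n))
    (h : Dismantlable po Finset.univ) :
    (assocMatrix po).det = 0 := by
  have h1 := key po Finset.univ h
  have h2 : ((assocMatrix po).submatrix
      (fun i : ↥(Finset.univ : Finset (Fin n)) => (i : Fin n))
      (fun i : ↥(Finset.univ : Finset (Fin n)) => (i : Fin n))).det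
      = (assocMatrix po).det :=
    Matrix.det_submatrix_equiv_self (Equiv.subtypeUnivEquiv (fun x => Finset.mem_univ x)) _
  rw [← h2]
  exact h1
end

section
/- If the poset (Fin n, ≤) is dismantlable (equivalently, the associated finite T₀-space is contractible), then rank M = n − 1; that is, n − rank M = 1. -/
open scoped Classical

namespace Stmt12Aux

open Matrix

variable {n : ℕ}

/-- The matrix `A` with row `x` and column `x` replaced by the corresponding
identity row/column. -/
noncomputable def Bmod (A : Matrix (Fin n) (Fin n) ℤ) (x : Fin n) :
    Matrix (Fin n) (Fin n) ℤ :=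
  Matrix.of fun i j => if i = x ∨ j = x then (if i = j then 1 else 0) else A i j

/-- The matrix of the poset restricted to `s`, extended by the identity
outside `s`. -/
noncomputable def Nmat (po : PartialOrder (Fin n)) (s : Finset (Fin n)) :
    Matrix (Fin n) (Fin n) ℤ :=
  Matrix.of fun i j =>
    if i ∈ s then (if j ∈ s then assocMatrix po i j else 0)
    else (if i = j then 1 else 0)

/-- The identity matrix with the `(z,z)` entry replaced by `0`. -/
noncomputable def Emat (z : Fin n) : Matrix (Fin n) (Fin n) ℤ :=
  Matrix.diagonal (fun i => if i = z then 0 else 1)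

lemma mul_vecMulVec_single (u : Fin n → ℤ) (p : Fin n)
    (B : Matrix (Fin n) (Fin n) ℤ) (i j : Fin n) :
    (vecMulVec u (Pi.single p 1) * B) i j = u i * B p j := by
  rw [Matrix.mul_apply, Finset.sum_eq_single p]
  · simp [Matrix.vecMulVec_apply]
  · intro k _ hk
    simp [Matrix.vecMulVec_apply, Pi.single_eq_of_ne hk]
  · intro hp; exact absurd (Finset.mem_univ p) hp

lemma isUnit_one_sub_vecMulVec (u : Fin n → ℤ) (p : Fin n) (hup : u p = 0) :
    IsUnit (1 - vecMulVec u (Pi.single p 1)) := by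
  set V := vecMulVec u (Pi.single p 1) with hV
  have hVV : V * V = 0 := by
    ext i j
    rw [hV, mul_vecMulVec_single]
    simp [Matrix.vecMulVec_apply, hup]
  refine isUnit_iff_exists.mpr ⟨1 + V, ?_, ?_⟩
  · rw [sub_mul, one_mul, mul_add, mul_one, hVV, add_zero]
    abel
  · rw [add_mul, one_mul, mul_sub, mul_one, hVV, sub_zero]
    abel

/-- Key row-reduction step: if row `x` agrees with row `y` away from column `x`,
with `A x x = 0`, `A y x = 1`, then `A` can be transformed by an invertible
left multiplication into `Bmod A x`. -/
lemma key_row (A : Matrix (Fin n) (Fin n) ℤ) (x y : Fin n) (hyx : y ≠ x)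
    (h1 : ∀ j, j ≠ x → A x j = A y j) (h2 : A x x = 0) (h3 : A y x = 1) :
    ∃ P : Matrix (Fin n) (Fin n) ℤ, IsUnit P ∧ P * A = Bmod A x := by
  set T : Matrix (Fin n) (Fin n) ℤ :=
    1 - vecMulVec (Pi.single x 1) (Pi.single y 1) with hT
  set d : Fin n → ℤ := fun i => if i = x then -1 else 1 with hd
  set D : Matrix (Fin n) (Fin n) ℤ := Matrix.diagonal d with hD
  set w : Fin n → ℤ := fun i => if i = x then 0 else A i x with hw
  set C : Matrix (Fin n) (Fin n) ℤ := 1 - vecMulVec w (Pi.single x 1) with hC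
  set A1 : Matrix (Fin n) (Fin n) ℤ :=
    Matrix.of (fun i j => A i j - (Pi.single x 1 : Fin n → ℤ) i * A y j) with hA1
  set A2 : Matrix (Fin n) (Fin n) ℤ :=
    Matrix.of (fun i j => if i = x then (if j = x then (1 : ℤ) else 0) else A i j) with hA2
  have e1 : T * A = A1 := by
    ext i j
    rw [hT, Matrix.sub_mul, Matrix.one_mul, Matrix.sub_apply, mul_vecMulVec_single]
    rfl
  have e2 : D * A1 = A2 := by
    ext i j
    rw [hD, Matrix.diagonal_mul, hA1, hA2]
    simp only [Matrix.of_apply, hd]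
    by_cases hi : i = x
    · rw [if_pos hi, if_pos hi, hi, Pi.single_eq_same, one_mul]
      by_cases hj : j = x
      · rw [if_pos hj, hj, h2, h3]; norm_num
      · rw [if_neg hj, h1 j hj]; ring
    · rw [if_neg hi, if_neg hi, Pi.single_eq_of_ne hi, zero_mul, sub_zero, one_mul]
  have e3 : C * A2 = Bmod A x := by
    ext i j
    rw [hC, Matrix.sub_mul, Matrix.one_mul, Matrix.sub_apply, mul_vecMulVec_single,
      hA2]
    simp only [Matrix.of_apply, hw, Bmod, eq_self_iff_true, if_true]
    by_cases hi : i = x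
    · rw [if_pos hi, if_pos hi, if_pos (Or.inl hi), zero_mul, sub_zero]
      by_cases hj : j = x
      · rw [if_pos hj, if_pos (hi.trans hj.symm)]
      · rw [if_neg hj, if_neg (fun e : i = j => hj (e.symm.trans hi))]
    · rw [if_neg hi, if_neg hi]
      by_cases hj : j = x
      · rw [if_pos hj, mul_one, if_pos (Or.inr hj), hj, sub_self, if_neg hi]
      · rw [if_neg hj, mul_zero, sub_zero, if_neg (by tauto)]
  have hTu : IsUnit T := by
    apply isUnit_one_sub_vecMulVec
    exact Pi.single_eq_of_ne hyx 1
  have hdd : Matrix.diagonal d * Matrix.diagonal d = 1 := by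
    rw [Matrix.diagonal_mul_diagonal]
    ext i j
    by_cases hij : i = j
    · rw [hij, Matrix.diagonal_apply_eq, Matrix.one_apply_eq]
      simp only [hd]
      by_cases hj : j = x <;> simp [hj]
    · rw [Matrix.diagonal_apply_ne _ hij, Matrix.one_apply_ne hij]
  have hDu : IsUnit D := isUnit_iff_exists.mpr ⟨D, by rw [hD, hdd], by rw [hD, hdd]⟩
  have hCu : IsUnit C := by
    apply isUnit_one_sub_vecMulVec
    simp [hw]
  refine ⟨C * D * T, (hCu.mul hDu).mul hTu, ?_⟩
  rw [mul_assoc, mul_assoc, e1, e2, e3]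

lemma IsUnit.det_isUnit {A : Matrix (Fin n) (Fin n) ℤ} (h : IsUnit A) :
    IsUnit A.det := by
  obtain ⟨u, rfl⟩ := h
  exact isUnit_iff_exists.mpr ⟨(u⁻¹ : (Matrix (Fin n) (Fin n) ℤ)ˣ).val.det,
    by rw [← Matrix.det_mul, u.mul_inv, Matrix.det_one],
    by rw [← Matrix.det_mul, u.inv_mul, Matrix.det_one]⟩

lemma isUnit_transpose {A : Matrix (Fin n) (Fin n) ℤ} (h : IsUnit A) :
    IsUnit Aᵀ := by
  obtain ⟨B, hAB, hBA⟩ := isUnit_iff_exists.mp h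
  exact isUnit_iff_exists.mpr ⟨Bᵀ,
    by rw [← Matrix.transpose_mul, hBA, Matrix.transpose_one],
    by rw [← Matrix.transpose_mul, hAB, Matrix.transpose_one]⟩

lemma Bmod_eq_Nmat_erase (po : PartialOrder (Fin n)) (s : Finset (Fin n))
    (x : Fin n) (hx : x ∈ s) :
    Bmod (Nmat po s) x = Nmat po (s.erase x) := by
  ext i j
  by_cases hi : i = x
  · subst hi
    simp [Bmod, Nmat, Finset.mem_erase]
  · by_cases hj : j = x
    · subst hj
      simp only [Bmod, Matrix.of_apply, or_true, if_neg hi, Nmat, Finset.mem_erase]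
      by_cases his : i ∈ s
      · simp [hi, his]
      · simp [hi, his]
    · simp only [Bmod, Matrix.of_apply, Nmat, Finset.mem_erase]
      rw [if_neg (by tauto)]
      by_cases his : i ∈ s
      · by_cases hjs : j ∈ s
        · simp [hi, hj, his, hjs]
        · simp [hi, hj, his, hjs]
      · simp [hi, his]

/-- Main induction: a dismantlable subposet's extended matrix is equivalent
(by invertible row and column operations) to `Emat z` for some `z`. -/
lemma main_induction (po : PartialOrder (Fin n)) (s : Finset (Fin n))
    (h : Dismantlable po s) :
    ∃ (z : Fin n) (P Q : Matrix (Fin n) (Fin n) ℤ),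
      IsUnit P ∧ IsUnit Q ∧ P * Nmat po s * Q = Emat z := by
  induction h with
  | single x =>
      refine ⟨x, 1, 1, isUnit_one, isUnit_one, ?_⟩
      rw [one_mul, mul_one]
      ext i j
      simp only [Nmat, Emat, Matrix.of_apply, Finset.mem_singleton,
        Matrix.diagonal_apply, assocMatrix]
      by_cases hi : i = x <;> by_cases hj : j = x <;> by_cases hij : i = j <;>
        simp_all [po.le_refl]
  | step s x hx hbeat hdis IH =>
      obtain ⟨z, P, Q, hP, hQ, hPQ⟩ := IH
      rcases hbeat with ⟨y, hys, hlt, hmin⟩ | ⟨y, hys, hlt, hmax⟩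
      · -- up beat point
        have hle : po.le x y ∧ ¬ po.le y x := by
          have := (po.lt_iff_le_not_ge x y).mp hlt
          exact this
        have hyx : y ≠ x := by
          intro e; subst e
          exact hle.2 (po.le_refl y)
        have h1 : ∀ j, j ≠ x → Nmat po s x j = Nmat po s y j := by
          intro j hj
          simp only [Nmat, Matrix.of_apply, if_pos hx, if_pos hys]
          by_cases hjs : j ∈ s
          · simp only [if_pos hjs, assocMatrix, Matrix.of_apply]
            by_cases hxj : po.le x j
            · have hltxj : po.lt x j := by
                rw [po.lt_iff_le_not_ge]
                refine ⟨hxj, fun hjx => hj (po.le_antisymm _ _ hjx hxj)⟩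
              rw [if_pos hxj, if_pos (hmin j hjs hltxj)]
            · rw [if_neg hxj, if_neg (fun hyj => hxj (po.le_trans _ _ _ hle.1 hyj))]
          · simp [hjs]
        have h2 : Nmat po s x x = 0 := by
          simp [Nmat, hx, assocMatrix, po.le_refl]
        have h3 : Nmat po s y x = 1 := by
          simp [Nmat, hx, hys, assocMatrix, hle.2]
        obtain ⟨P₀, hP₀, hP₀A⟩ := key_row (Nmat po s) x y hyx h1 h2 h3
        refine ⟨z, P * P₀, Q, hP.mul hP₀, hQ, ?_⟩
        rw [mul_assoc P P₀ (Nmat po s), hP₀A, Bmod_eq_Nmat_erase po s x hx, hPQ]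
      · -- down beat point
        have hle : po.le y x ∧ ¬ po.le x y := by
          have := (po.lt_iff_le_not_ge y x).mp hlt
          exact this
        have hyx : y ≠ x := by
          intro e; subst e
          exact hle.2 (po.le_refl y)
        have h1 : ∀ j, j ≠ x → (Nmat po s)ᵀ x j = (Nmat po s)ᵀ y j := by
          intro j hj
          simp only [Matrix.transpose_apply, Nmat, Matrix.of_apply, if_pos hx, if_pos hys]
          by_cases hjs : j ∈ s
          · simp only [if_pos hjs, assocMatrix, Matrix.of_apply]
            by_cases hjx : po.le j x
            · have hltjx : po.lt j x := by
                rw [po.lt_iff_le_not_ge]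
                refine ⟨hjx, fun hxj => hj (po.le_antisymm _ _ hjx hxj)⟩
              rw [if_pos hjx, if_pos (hmax j hjs hltjx)]
            · rw [if_neg hjx, if_neg (fun hjy => hjx (po.le_trans _ _ _ hjy hle.1))]
          · have hjy : j ≠ y := fun e => hjs (e ▸ hys)
            simp [hjs, hj, hjy]
        have h2 : (Nmat po s)ᵀ x x = 0 := by
          simp [Nmat, hx, assocMatrix, po.le_refl]
        have h3 : (Nmat po s)ᵀ y x = 1 := by
          simp [Nmat, hx, hys, assocMatrix, hle.2]
        obtain ⟨P₀, hP₀, hP₀A⟩ := key_row (Nmat po s)ᵀ x y hyx h1 h2 h3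
        have htr : Nmat po s * P₀ᵀ = Nmat po (s.erase x) := by
          have := congrArg Matrix.transpose hP₀A
          rw [Matrix.transpose_mul, Matrix.transpose_transpose] at this
          rw [this, ← Bmod_eq_Nmat_erase po s x hx]
          ext i j
          simp only [Matrix.transpose_apply, Bmod, Matrix.of_apply,
            Matrix.transpose_apply]
          by_cases hc : i = x ∨ j = x
          · rw [if_pos (Or.symm hc), if_pos hc]
            by_cases hij : i = j
            · rw [if_pos hij.symm, if_pos hij]
            · rw [if_neg (fun e => hij e.symm), if_neg hij]
          · rw [if_neg (fun e => hc (Or.symm e)), if_neg hc]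
        refine ⟨z, P, P₀ᵀ * Q, hP, (isUnit_transpose hP₀).mul hQ, ?_⟩
        calc P * Nmat po s * (P₀ᵀ * Q) = P * (Nmat po s * P₀ᵀ) * Q := by
              rw [mul_assoc, mul_assoc, mul_assoc]
          _ = Emat z := by rw [htr, hPQ]

lemma rank_Emat (z : Fin n) : (Emat z).rank = n - 1 := by
  classical
  have htr : (Emat z)ᵀ = Emat z := by
    ext i j
    simp only [Matrix.transpose_apply, Emat, Matrix.diagonal_apply]
    by_cases hij : i = j
    · subst hij; rfl
    · rw [if_neg (Ne.symm hij), if_neg hij]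
  set b : {i : Fin n // i ≠ z} → (Fin n → ℤ) := fun i => Pi.single (i : Fin n) 1 with hb
  have hcol : ∀ j : Fin n, (Emat z)ᵀ j = if j = z then 0 else Pi.single j 1 := by
    intro j
    funext i
    simp only [Matrix.transpose_apply, Emat, Matrix.diagonal_apply]
    by_cases hj : j = z
    · rw [if_pos hj, Pi.zero_apply]
      by_cases hij : i = j
      · rw [if_pos hij, if_pos (hij.trans hj)]
      · rw [if_neg hij]
    · rw [if_neg hj]
      by_cases hij : i = j
      · rw [if_pos hij, if_neg (fun e : i = z => hj (hij.symm.trans e)), hij,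
          Pi.single_eq_same]
      · rw [if_neg hij, Pi.single_eq_of_ne hij]
  have hspan : Submodule.span ℤ (Set.range (Emat z)ᵀ)
      = Submodule.span ℤ (Set.range b) := by
    apply le_antisymm
    · rw [Submodule.span_le]
      rintro v ⟨j, rfl⟩
      rw [hcol j]
      by_cases hj : j = z
      · rw [if_pos hj]
        exact Submodule.zero_mem _
      · rw [if_neg hj]
        exact Submodule.subset_span ⟨⟨j, hj⟩, rfl⟩
    · rw [Submodule.span_le]
      rintro v ⟨⟨j, hj⟩, rfl⟩
      apply Submodule.subset_span
      exact ⟨j, by rw [hcol j, if_neg hj]⟩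
  have hli : LinearIndependent ℤ b := by
    have hbase := (Pi.basisFun ℤ (Fin n)).linearIndependent
    have := hbase.comp (fun i : {i : Fin n // i ≠ z} => (i : Fin n)) Subtype.val_injective
    convert this using 1
    case e'_7 => exact Subsingleton.elim _ _
    funext i
    rw [hb]
    simp [Function.comp]
  have hcard : Fintype.card {i : Fin n // i ≠ z} = n - 1 := by
    have := Fintype.card_subtype_compl (fun i : Fin n => i = z)
    simp only [Fintype.card_subtype_eq, Fintype.card_fin] at this
    convert this using 2
  rw [Matrix.rank_eq_finrank_span_cols, show (Emat z).col = (Emat z)ᵀ from rfl, hspan, finrank_span_eq_card hli, hcard]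

end Stmt12Aux

/-- If the poset is dismantlable (equivalently, the associated finite space is
contractible), then the rank of its matrix is `n - 1`, i.e. `n - rank M = 1`. -/
theorem stmt12 {n : ℕ} (po : PartialOrder (Fin n))
    (h : Dismantlable po Finset.univ) :
    (assocMatrix po).rank = n - 1 ∧ n - (assocMatrix po).rank = 1 := by
  classical
  obtain ⟨z, P, Q, hP, hQ, hPQ⟩ := Stmt12Aux.main_induction po Finset.univ h
  have hN : Stmt12Aux.Nmat po Finset.univ = assocMatrix po := by
    ext i j
    simp [Stmt12Aux.Nmat]
  rw [hN] at hPQ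
  have hrank : (assocMatrix po).rank = n - 1 := by
    have h1 : (P * assocMatrix po * Q).rank = (P * assocMatrix po).rank :=
      Matrix.rank_mul_eq_left_of_isUnit_det Q _ (Stmt12Aux.IsUnit.det_isUnit hQ)
    have h2 : (P * assocMatrix po).rank = (assocMatrix po).rank :=
      Matrix.rank_mul_eq_right_of_isUnit_det P _ (Stmt12Aux.IsUnit.det_isUnit hP)
    rw [← h2, ← h1, hPQ, Stmt12Aux.rank_Emat]
  have hn : 0 < n := z.pos
  exact ⟨hrank, by omega⟩
end

section
/- Let i : Fin n be a weak beat point: either the induced subposet on {k | k < i} is dismantlable (i is a down weak beat point with contractible punctured down-set) or the induced subposet on {k | i < k} is dismantlable (i is an up weak beat point with contractible punctured up-set). Then det M = − det (M∖i), where M∖i is the matrix obtained from M by deleting row i and column i. -/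
open scoped Classical

namespace Stmt13Aux

variable {n : ℕ}

lemma PO.le_of_lt (po : PartialOrder (Fin n)) {a b : Fin n} (h : po.lt a b) : po.le a b :=
  ((po.lt_iff_le_not_ge a b).mp h).1

lemma PO.not_le_of_lt (po : PartialOrder (Fin n)) {a b : Fin n} (h : po.lt a b) : ¬ po.le b a :=
  ((po.lt_iff_le_not_ge a b).mp h).2

lemma PO.ne_of_lt (po : PartialOrder (Fin n)) {a b : Fin n} (h : po.lt a b) : a ≠ b := by
  rintro rfl
  exact PO.not_le_of_lt po h (po.le_refl a)

lemma PO.lt_of_le_of_ne (po : PartialOrder (Fin n)) {a b : Fin n} (h : po.le a b)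
    (hne : a ≠ b) : po.lt a b :=
  (po.lt_iff_le_not_ge a b).mpr ⟨h, fun h' => hne (po.le_antisymm _ _ h h')⟩

lemma PO.lt_irrefl (po : PartialOrder (Fin n)) (a : Fin n) : ¬ po.lt a a := fun h =>
  PO.ne_of_lt po h rfl

lemma PO.lt_trans (po : PartialOrder (Fin n)) {a b c : Fin n} (h1 : po.lt a b)
    (h2 : po.lt b c) : po.lt a c := by
  refine (po.lt_iff_le_not_ge a c).mpr ⟨po.le_trans _ _ _ (PO.le_of_lt po h1) (PO.le_of_lt po h2),
    fun h => ?_⟩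
  exact PO.not_le_of_lt po h1 (po.le_trans _ _ _ (PO.le_of_lt po h2) h)

lemma ite_classical {P : Prop} [h1 : Decidable P] (a b : ℤ) :
    (@ite ℤ P h1 a b) = (@ite ℤ P (Classical.propDecidable P) a b) := by
  by_cases h : P <;> simp [h]

/-- Sum over all chains contained in `s` of `(-1)^card`. -/
noncomputable def chainSum (po : PartialOrder (Fin n)) (s : Finset (Fin n)) : ℤ :=
  ∑ c ∈ s.powerset, if IsChain po.le (↑c : Set (Fin n)) then (-1 : ℤ) ^ c.card else 0

lemma sum_toggle (s : Finset (Fin n)) (p : Finset (Fin n) → Prop) (y : Fin n) (hy : y ∈ s)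
    (hp : ∀ c ∈ s.powerset, y ∉ c → (p c ↔ p (insert y c))) :
    ∑ c ∈ s.powerset, (if p c then (-1 : ℤ) ^ c.card else 0) = 0 := by
  refine Finset.sum_involution (fun c _ => if y ∈ c then c.erase y else insert y c)
    ?_ ?_ ?_ ?_
  · intro c hc
    by_cases hyc : y ∈ c
    · simp only [hyc, if_true]
      have he : c.erase y ∈ s.powerset := Finset.mem_powerset.mpr
        (Finset.Subset.trans (Finset.erase_subset _ _) (Finset.mem_powerset.mp hc))
      have hiff : p (c.erase y) ↔ p c := by
        have := hp (c.erase y) he (Finset.notMem_erase _ _)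
        rwa [Finset.insert_erase hyc] at this
      have hcard : c.card = (c.erase y).card + 1 := (Finset.card_erase_add_one hyc).symm
      by_cases hpc : p c
      · rw [if_pos hpc, if_pos (hiff.mpr hpc), hcard, pow_succ]
        ring
      · rw [if_neg hpc, if_neg (fun h => hpc (hiff.mp h)), add_zero]
    · simp only [hyc, if_false]
      have hiff := hp c hc hyc
      have hcard : (insert y c).card = c.card + 1 := Finset.card_insert_of_notMem hyc
      by_cases hpc : p c
      · rw [if_pos hpc, if_pos (hiff.mp hpc), hcard, pow_succ]
        ring
      · rw [if_neg hpc, if_neg (fun h => hpc (hiff.mpr h)), add_zero]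
  · intro c hc _
    by_cases hyc : y ∈ c
    · simp only [hyc, if_true]
      exact fun h => Finset.notMem_erase y c (by rw [h]; exact hyc)
    · simp only [hyc, if_false]
      exact fun h => hyc (by rw [← h]; exact Finset.mem_insert_self y c)
  · intro c hc
    by_cases hyc : y ∈ c
    · simp only [hyc, if_true]
      exact Finset.mem_powerset.mpr (Finset.Subset.trans (Finset.erase_subset _ _)
        (Finset.mem_powerset.mp hc))
    · simp only [hyc, if_false]
      exact Finset.mem_powerset.mpr (Finset.insert_subset hy (Finset.mem_powerset.mp hc))
  · intro c hc
    by_cases hyc : y ∈ c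
    · simp [hyc, Finset.notMem_erase, Finset.insert_erase]
    · simp [hyc, Finset.mem_insert_self, Finset.erase_insert]

lemma chainSum_eq_zero (po : PartialOrder (Fin n)) (s : Finset (Fin n)) (y : Fin n)
    (hy : y ∈ s) (hcomp : ∀ z ∈ s, z ≠ y → po.le y z ∨ po.le z y) :
    chainSum po s = 0 := by
  refine sum_toggle s _ y hy ?_
  intro c hc hyc
  constructor
  · intro hch
    rw [Finset.coe_insert]
    refine hch.insert fun z hz hzy => ?_
    exact hcomp z (Finset.mem_powerset.mp hc hz) (fun h => hzy h.symm)
  · intro hch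
    have : (↑c : Set (Fin n)) ⊆ ↑(insert y c) := by
      rw [Finset.coe_insert]; exact Set.subset_insert _ _
    exact hch.mono this


lemma sum_through_beat (po : PartialOrder (Fin n)) (s : Finset (Fin n)) (x : Fin n)
    (hbeat : IsBeatPointIn po s x) :
    ∑ c ∈ s.powerset,
      (if x ∈ c ∧ IsChain po.le (↑c : Set (Fin n)) then (-1 : ℤ) ^ c.card else 0) = 0 := by
  have norm : ∀ (y : Fin n), y ∈ s → (∀ c ∈ s.powerset, y ∉ c →
      ((x ∈ c ∧ IsChain po.le (↑c : Set (Fin n))) ↔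
        (x ∈ insert y c ∧ IsChain po.le (↑(insert y c) : Set (Fin n))))) →
      ∑ c ∈ s.powerset,
        (if x ∈ c ∧ IsChain po.le (↑c : Set (Fin n)) then (-1 : ℤ) ^ c.card else 0) = 0 := by
    intro y hys hp
    exact Eq.trans (Finset.sum_congr rfl fun c _ => ite_classical _ _)
      (sum_toggle s (fun c => x ∈ c ∧ IsChain po.le (↑c : Set (Fin n))) y hys hp)
  obtain ⟨y, hys, hxy, hmin⟩ | ⟨y, hys, hyx, hmax⟩ := hbeat
  · -- up beat point: y is least among elements strictly above x
    refine norm y hys ?_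
    intro c hc hyc
    have hxney : x ≠ y := PO.ne_of_lt po hxy
    constructor
    · rintro ⟨hxc, hch⟩
      refine ⟨Finset.mem_insert_of_mem hxc, ?_⟩
      rw [Finset.coe_insert]
      refine hch.insert fun z hz hzy => ?_
      rcases eq_or_ne z x with rfl | hne
      · exact Or.inr (PO.le_of_lt po hxy)
      · rcases hch hz (Finset.mem_coe.mpr hxc) hne with h | h
        · exact Or.inr (po.le_trans _ _ _ h (PO.le_of_lt po hxy))
        · refine Or.inl (hmin z (Finset.mem_powerset.mp hc (Finset.mem_coe.mp hz)) ?_)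
          exact PO.lt_of_le_of_ne po h (Ne.symm hne)
    · rintro ⟨hxc, hch⟩
      refine ⟨(Finset.mem_insert.mp hxc).resolve_left hxney, ?_⟩
      refine hch.mono ?_
      rw [Finset.coe_insert]
      exact Set.subset_insert _ _
  · -- down beat point
    refine norm y hys ?_
    intro c hc hyc
    have hxney : x ≠ y := (PO.ne_of_lt po hyx).symm
    constructor
    · rintro ⟨hxc, hch⟩
      refine ⟨Finset.mem_insert_of_mem hxc, ?_⟩
      rw [Finset.coe_insert]
      refine hch.insert fun z hz hzy => ?_
      rcases eq_or_ne z x with rfl | hne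
      · exact Or.inl (PO.le_of_lt po hyx)
      · rcases hch hz (Finset.mem_coe.mpr hxc) hne with h | h
        · refine Or.inr (hmax z (Finset.mem_powerset.mp hc (Finset.mem_coe.mp hz)) ?_)
          exact PO.lt_of_le_of_ne po h hne
        · exact Or.inl (po.le_trans _ _ _ (PO.le_of_lt po hyx) h)
    · rintro ⟨hxc, hch⟩
      refine ⟨(Finset.mem_insert.mp hxc).resolve_left hxney, ?_⟩
      refine hch.mono ?_
      rw [Finset.coe_insert]
      exact Set.subset_insert _ _

lemma chainSum_erase (po : PartialOrder (Fin n)) (s : Finset (Fin n)) (x : Fin n) (hx : x ∈ s) :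
    chainSum po s = chainSum po (s.erase x)
      + ∑ c ∈ s.powerset,
          (if x ∈ c ∧ IsChain po.le (↑c : Set (Fin n)) then (-1 : ℤ) ^ c.card else 0) := by
  unfold chainSum
  have hsplit : ∀ c ∈ s.powerset,
      (if IsChain po.le (↑c : Set (Fin n)) then (-1 : ℤ) ^ c.card else 0)
        = (if x ∉ c ∧ IsChain po.le (↑c : Set (Fin n)) then (-1 : ℤ) ^ c.card else 0)
          + (if x ∈ c ∧ IsChain po.le (↑c : Set (Fin n)) then (-1 : ℤ) ^ c.card else 0) := by
    intro c _
    by_cases h1 : x ∈ c <;> by_cases h2 : IsChain po.le (↑c : Set (Fin n)) <;> simp [h1, h2]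
  rw [Finset.sum_congr rfl hsplit, Finset.sum_add_distrib]
  congr 1
  refine (Finset.sum_subset (Finset.powerset_mono.mpr (Finset.erase_subset x s)) ?_).symm.trans ?_
  · intro c hc hnc
    have hxc : x ∈ c := by
      by_contra hxc
      exact hnc (Finset.mem_powerset.mpr (Finset.subset_erase.mpr
        ⟨Finset.mem_powerset.mp hc, hxc⟩))
    simp [hxc]
  · refine Finset.sum_congr rfl fun c hc => ?_
    have hxc : x ∉ c := (Finset.subset_erase.mp (Finset.mem_powerset.mp hc)).2
    simp [hxc]

lemma dismantlable_chainSum (po : PartialOrder (Fin n)) (s : Finset (Fin n))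
    (h : Dismantlable po s) : chainSum po s = 0 := by
  induction h with
  | single x =>
    refine chainSum_eq_zero po {x} x (Finset.mem_singleton_self x) ?_
    intro z hz hne
    exact absurd (Finset.mem_singleton.mp hz) hne
  | step s x hx hbeat h ih =>
    rw [chainSum_erase po s x hx, ih, sum_through_beat po s x hbeat, add_zero]

lemma exists_po_max (po : PartialOrder (Fin n)) :
    ∀ s : Finset (Fin n), s.Nonempty → ∃ m ∈ s, ∀ z ∈ s, ¬ po.lt m z := by
  intro s
  induction s using Finset.induction_on with
  | empty => rintro ⟨x, hx⟩; exact absurd hx (Finset.notMem_empty x)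
  | @insert a s ha ih =>
    intro _
    rcases s.eq_empty_or_nonempty with rfl | hne
    · refine ⟨a, Finset.mem_insert_self _ _, ?_⟩
      intro z hz
      rcases Finset.mem_insert.mp hz with rfl | hzs
      · exact PO.lt_irrefl po z
      · exact absurd hzs (Finset.notMem_empty z)
    · obtain ⟨m, hms, hmax⟩ := ih hne
      by_cases hma : po.lt m a
      · refine ⟨a, Finset.mem_insert_self _ _, ?_⟩
        intro z hz hlt
        rcases Finset.mem_insert.mp hz with rfl | hzs
        · exact PO.lt_irrefl po z hlt
        · exact hmax z hzs (PO.lt_trans po hma hlt)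
      · refine ⟨m, Finset.mem_insert_of_mem hms, ?_⟩
        intro z hz hlt
        rcases Finset.mem_insert.mp hz with rfl | hzs
        · exact hma hlt
        · exact hmax z hzs hlt

lemma exists_po_min (po : PartialOrder (Fin n)) :
    ∀ s : Finset (Fin n), s.Nonempty → ∃ m ∈ s, ∀ z ∈ s, ¬ po.lt z m := by
  intro s
  induction s using Finset.induction_on with
  | empty => rintro ⟨x, hx⟩; exact absurd hx (Finset.notMem_empty x)
  | @insert a s ha ih =>
    intro _
    rcases s.eq_empty_or_nonempty with rfl | hne
    · refine ⟨a, Finset.mem_insert_self _ _, ?_⟩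
      intro z hz
      rcases Finset.mem_insert.mp hz with rfl | hzs
      · exact PO.lt_irrefl po z
      · exact absurd hzs (Finset.notMem_empty z)
    · obtain ⟨m, hms, hmin⟩ := ih hne
      by_cases hma : po.lt a m
      · refine ⟨a, Finset.mem_insert_self _ _, ?_⟩
        intro z hz hlt
        rcases Finset.mem_insert.mp hz with rfl | hzs
        · exact PO.lt_irrefl po z hlt
        · exact hmin z hzs (PO.lt_trans po hlt hma)
      · refine ⟨m, Finset.mem_insert_of_mem hms, ?_⟩
        intro z hz hlt
        rcases Finset.mem_insert.mp hz with rfl | hzs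
        · exact hma hlt
        · exact hmin z hzs hlt

lemma chain_min (po : PartialOrder (Fin n)) {c : Finset (Fin n)} (hne : c.Nonempty)
    (hch : IsChain po.le (↑c : Set (Fin n))) : ∃ j, j ∈ c ∧ ∀ z ∈ c, po.le j z := by
  obtain ⟨m, hm, hmin⟩ := exists_po_min po c hne
  refine ⟨m, hm, fun z hz => ?_⟩
  rcases eq_or_ne m z with rfl | hne'
  · exact po.le_refl _
  rcases hch (Finset.mem_coe.mpr hm) (Finset.mem_coe.mpr hz) hne' with h | h
  · exact h
  · exact absurd (PO.lt_of_le_of_ne po h hne'.symm) (hmin z hz)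

/-- The minimum of a nonempty chain (junk value semantics otherwise). -/
noncomputable def cmin (po : PartialOrder (Fin n)) (c : Finset (Fin n)) (hne : c.Nonempty) :
    Fin n :=
  if h : ∃ j, j ∈ c ∧ ∀ z ∈ c, po.le j z then h.choose else hne.choose

lemma cmin_spec (po : PartialOrder (Fin n)) {c : Finset (Fin n)} (hne : c.Nonempty)
    (hch : IsChain po.le (↑c : Set (Fin n))) :
    cmin po c hne ∈ c ∧ ∀ z ∈ c, po.le (cmin po c hne) z := by
  unfold cmin
  have h := chain_min po hne hch
  rw [dif_pos h]
  exact h.choose_spec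

lemma cmin_eq (po : PartialOrder (Fin n)) {c : Finset (Fin n)} (hne : c.Nonempty)
    (hch : IsChain po.le (↑c : Set (Fin n))) {j0 : Fin n} (hj0 : j0 ∈ c)
    (hmin : ∀ z ∈ c, po.le j0 z) : cmin po c hne = j0 :=
  po.le_antisymm _ _ ((cmin_spec po hne hch).2 j0 hj0) (hmin _ (cmin_spec po hne hch).1)

lemma peel (po : PartialOrder (Fin n)) (s : Finset (Fin n))
    (hs : ∀ a ∈ s, ∀ b, po.le a b → b ∈ s) :
    ∑ j ∈ s, chainSum po (Finset.univ.filter fun k => po.lt j k) = 1 - chainSum po s := by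
  have h1 : chainSum po s = 1 + ∑ c ∈ s.powerset,
      (if c.Nonempty ∧ IsChain po.le (↑c : Set (Fin n)) then (-1 : ℤ) ^ c.card else 0) := by
    unfold chainSum
    have hsplit : ∀ c ∈ s.powerset,
        (if IsChain po.le (↑c : Set (Fin n)) then (-1 : ℤ) ^ c.card else 0)
          = (if c = ∅ then (1 : ℤ) else 0)
            + (if c.Nonempty ∧ IsChain po.le (↑c : Set (Fin n)) then (-1 : ℤ) ^ c.card else 0) := by
      intro c _
      rcases eq_or_ne c ∅ with rfl | hne
      · simp
      · have hne' : c.Nonempty := Finset.nonempty_iff_ne_empty.mpr hne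
        simp [hne, hne']
    rw [Finset.sum_congr rfl hsplit, Finset.sum_add_distrib]
    congr 1
    rw [Finset.sum_ite_eq' s.powerset (∅ : Finset (Fin n)) (fun _ => (1 : ℤ)),
      if_pos (Finset.empty_mem_powerset s)]
  have e : ∀ X : ℤ, (1 : ℤ) - (1 + X) = -X := fun X => by ring
  rw [h1, e]
  have h2 : ∀ j : Fin n, chainSum po (Finset.univ.filter fun k => po.lt j k)
      = ∑ b ∈ (Finset.univ.filter fun k => po.lt j k).powerset.filter
          (fun b : Finset (Fin n) => IsChain po.le (↑b : Set (Fin n))), (-1 : ℤ) ^ b.card := by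
    intro j
    unfold chainSum
    rw [Finset.sum_filter]
  have h3 : -∑ c ∈ s.powerset,
      (if c.Nonempty ∧ IsChain po.le (↑c : Set (Fin n)) then (-1 : ℤ) ^ c.card else 0)
      = ∑ c ∈ s.powerset.filter (fun c : Finset (Fin n) => c.Nonempty ∧ IsChain po.le (↑c : Set (Fin n))),
          (-1 : ℤ) ^ (c.card + 1) := by
    rw [← Finset.sum_filter, ← Finset.sum_neg_distrib]
    refine Finset.sum_congr rfl fun c _ => ?_
    rw [pow_succ]; ring
  rw [h3, Finset.sum_congr rfl fun j _ => h2 j, Finset.sum_sigma']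
  refine Finset.sum_bij'
    (t := s.powerset.filter (fun c : Finset (Fin n) => c.Nonempty ∧ IsChain po.le (↑c : Set (Fin n))))
    (g := fun c => (-1 : ℤ) ^ (c.card + 1))
    (i := fun (p : (_ : Fin n) × Finset (Fin n)) _ => insert p.1 p.2)
    (j := fun c hc => ⟨cmin po c (Finset.mem_filter.mp hc).2.1,
      c.erase (cmin po c (Finset.mem_filter.mp hc).2.1)⟩) ?_ ?_ ?_ ?_ ?_
  · -- hi : insert p.1 p.2 ∈ T
    rintro ⟨j0, b⟩ hp
    obtain ⟨hj0, hb⟩ := Finset.mem_sigma.mp hp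
    obtain ⟨hbsub, hbch⟩ := Finset.mem_filter.mp hb
    rw [Finset.mem_powerset] at hbsub
    have hblt : ∀ z ∈ b, po.lt j0 z := fun z hz => (Finset.mem_filter.mp (hbsub hz)).2
    refine Finset.mem_filter.mpr ⟨Finset.mem_powerset.mpr ?_, Finset.insert_nonempty _ _, ?_⟩
    · intro z hz
      rcases Finset.mem_insert.mp hz with rfl | hzb
      · exact hj0
      · exact hs j0 hj0 z (PO.le_of_lt po (hblt z hzb))
    · rw [Finset.coe_insert]
      exact hbch.insert fun z hz _ => Or.inl (PO.le_of_lt po (hblt z (Finset.mem_coe.mp hz)))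
  · -- hj
    intro c hc
    obtain ⟨hcs, hcne, hcch⟩ := Finset.mem_filter.mp hc
    obtain ⟨hm, hmin⟩ := cmin_spec po (Finset.mem_filter.mp hc).2.1 hcch
    rw [Finset.mem_powerset] at hcs
    refine Finset.mem_sigma.mpr ⟨hcs hm, Finset.mem_filter.mpr ⟨Finset.mem_powerset.mpr ?_, ?_⟩⟩
    · intro z hz
      obtain ⟨hzm, hzc⟩ := Finset.mem_erase.mp hz
      exact Finset.mem_filter.mpr ⟨Finset.mem_univ z,
        PO.lt_of_le_of_ne po (hmin z hzc) (Ne.symm hzm)⟩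
    · exact hcch.mono (Finset.coe_subset.mpr (Finset.erase_subset _ _))
  · -- left_inv
    rintro ⟨j0, b⟩ hp
    obtain ⟨hj0, hb⟩ := Finset.mem_sigma.mp hp
    obtain ⟨hbsub, hbch⟩ := Finset.mem_filter.mp hb
    rw [Finset.mem_powerset] at hbsub
    have hblt : ∀ z ∈ b, po.lt j0 z := fun z hz => (Finset.mem_filter.mp (hbsub hz)).2
    have hj0b : j0 ∉ b := fun h => PO.lt_irrefl po j0 (hblt j0 h)
    have hch' : IsChain po.le (↑(insert j0 b) : Set (Fin n)) := by
      rw [Finset.coe_insert]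
      exact hbch.insert fun z hz _ =>
        Or.inl (PO.le_of_lt po (hblt z (Finset.mem_coe.mp hz)))
    have hmeq : ∀ H : (insert j0 b).Nonempty, cmin po (insert j0 b) H = j0 := by
      intro H
      refine cmin_eq po H hch' (Finset.mem_insert_self _ _) ?_
      intro z hz
      rcases Finset.mem_insert.mp hz with rfl | hzb
      · exact po.le_refl _
      · exact PO.le_of_lt po (hblt z hzb)
    simp only [hmeq]
    rw [Finset.erase_insert hj0b]
  · -- right_inv
    intro c hc
    obtain ⟨hcs, hcne, hcch⟩ := Finset.mem_filter.mp hc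
    exact Finset.insert_erase (cmin_spec po (Finset.mem_filter.mp hc).2.1 hcch).1
  · -- terms
    rintro ⟨j0, b⟩ hp
    obtain ⟨hj0, hb⟩ := Finset.mem_sigma.mp hp
    obtain ⟨hbsub, hbch⟩ := Finset.mem_filter.mp hb
    rw [Finset.mem_powerset] at hbsub
    have hblt : ∀ z ∈ b, po.lt j0 z := fun z hz => (Finset.mem_filter.mp (hbsub hz)).2
    have hj0b : j0 ∉ b := fun h => PO.lt_irrefl po j0 (hblt j0 h)
    show (-1 : ℤ) ^ b.card = (-1 : ℤ) ^ ((insert j0 b).card + 1)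
    rw [Finset.card_insert_of_notMem hj0b, pow_succ, pow_succ]
    ring

/-- The partial order induced on the complement of `i`, transported to `Fin n`. -/
def restrict (po : PartialOrder (Fin (n + 1))) (i : Fin (n + 1)) : PartialOrder (Fin n) where
  le a b := po.le (i.succAbove a) (i.succAbove b)
  lt a b := po.lt (i.succAbove a) (i.succAbove b)
  le_refl a := po.le_refl _
  le_trans a b c hab hbc := po.le_trans _ _ _ hab hbc
  le_antisymm a b h1 h2 := Fin.succAbove_right_injective (po.le_antisymm _ _ h1 h2)
  lt_iff_le_not_ge a b := po.lt_iff_le_not_ge _ _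

noncomputable def zeta (po : PartialOrder (Fin n)) : Matrix (Fin n) (Fin n) ℤ :=
  Matrix.of fun i j => if po.le i j then 1 else 0

lemma zeta_submatrix (po : PartialOrder (Fin (n + 1))) (i : Fin (n + 1)) :
    (zeta po).submatrix i.succAbove i.succAbove = zeta (restrict po i) := rfl

lemma det_zeta : ∀ (n : ℕ) (po : PartialOrder (Fin n)), (zeta po).det = 1 := by
  intro n
  induction n with
  | zero => intro po; exact Matrix.det_fin_zero
  | succ n ih =>
    intro po
    obtain ⟨m, -, hmax⟩ := exists_po_max po Finset.univ ⟨0, Finset.mem_univ 0⟩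
    rw [Matrix.det_succ_row (zeta po) m]
    have hrow : ∀ j, zeta po m j = if j = m then 1 else 0 := by
      intro j
      rcases eq_or_ne j m with rfl | hne
      · simp [zeta, po.le_refl]
      · have hnle : ¬ po.le m j := fun h =>
          hmax j (Finset.mem_univ j) (PO.lt_of_le_of_ne po h (Ne.symm hne))
        simp [zeta, hnle, hne]
    rw [Finset.sum_eq_single m]
    · rw [hrow m, if_pos rfl, zeta_submatrix, ih]
      have hev : Even ((m : ℕ) + (m : ℕ)) := ⟨m, rfl⟩
      rw [hev.neg_one_pow]
      ring
    · intro b _ hbm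
      rw [hrow b, if_neg hbm]
      ring
    · intro h
      exact absurd (Finset.mem_univ m) h

noncomputable def vvec (po : PartialOrder (Fin n)) : Fin n → ℤ := fun j =>
  chainSum po (Finset.univ.filter fun k => po.lt j k)

lemma chainSum_up (po : PartialOrder (Fin n)) (i : Fin n) :
    chainSum po (Finset.univ.filter fun k => po.le i k) = 0 := by
  refine chainSum_eq_zero po _ i (Finset.mem_filter.mpr ⟨Finset.mem_univ i, po.le_refl i⟩) ?_
  intro z hz _
  exact Or.inl (Finset.mem_filter.mp hz).2

lemma Zv (po : PartialOrder (Fin n)) (i : Fin n) :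
    ∑ j ∈ Finset.univ.filter (fun k => po.le i k), vvec po j = 1 := by
  unfold vvec
  rw [peel po _ ?_, chainSum_up po i, sub_zero]
  intro a ha b hab
  exact Finset.mem_filter.mpr ⟨Finset.mem_univ b,
    po.le_trans _ _ _ (Finset.mem_filter.mp ha).2 hab⟩

lemma Sv (po : PartialOrder (Fin n)) : ∑ j, vvec po j = 1 - chainSum po Finset.univ := by
  unfold vvec
  exact peel po Finset.univ (fun a _ b _ => Finset.mem_univ b)

lemma factored (po : PartialOrder (Fin n)) :
    assocMatrix po = zeta po * Matrix.vecMulVec (vvec po) 1 - zeta po := by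
  ext a b
  rw [Matrix.sub_apply, Matrix.mul_apply]
  have hterm : ∀ k, zeta po a k * Matrix.vecMulVec (vvec po) (1 : Fin n → ℤ) k b
      = if po.le a k then vvec po k else 0 := by
    intro k
    rw [Matrix.vecMulVec_apply, Pi.one_apply, mul_one]
    simp [zeta, ite_mul]
  rw [Finset.sum_congr rfl fun k _ => hterm k, ← Finset.sum_filter, Zv po a]
  by_cases h : po.le a b <;> simp [assocMatrix, zeta, h]

lemma detA (po : PartialOrder (Fin n)) :
    (assocMatrix po).det = (-1 : ℤ) ^ n * chainSum po Finset.univ := by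
  have hf : assocMatrix po = zeta po * (Matrix.vecMulVec (vvec po) 1 - 1) := by
    rw [Matrix.mul_sub, Matrix.mul_one]
    exact factored po
  rw [hf, Matrix.det_mul, det_zeta n po, one_mul]
  have key : Matrix.vecMulVec (vvec po) (1 : Fin n → ℤ) - 1
      = -(1 + Matrix.replicateCol Unit (-(vvec po)) * Matrix.replicateRow Unit (1 : Fin n → ℤ)) := by
    ext a b
    simp only [Matrix.sub_apply, Matrix.neg_apply, Matrix.add_apply, Matrix.vecMulVec_apply,
      Pi.one_apply, Matrix.mul_apply, Matrix.replicateCol_apply, Matrix.replicateRow_apply, Pi.neg_apply,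
      Finset.univ_unique, Finset.sum_singleton]
    by_cases h : a = b <;> simp [Matrix.one_apply, h] <;> ring
  rw [key, Matrix.det_neg, Matrix.det_one_add_replicateCol_mul_replicateRow, Fintype.card_fin]
  have hd : dotProduct (1 : Fin n → ℤ) (-(vvec po)) = -(∑ j, vvec po j) := by
    simp [dotProduct]
  rw [hd, Sv po]
  ring

lemma chain_map_iff (po : PartialOrder (Fin (n + 1))) (i : Fin (n + 1)) (c : Finset (Fin n)) :
    IsChain (restrict po i).le (↑c : Set (Fin n))
      ↔ IsChain po.le (↑(c.map i.succAboveEmb) : Set (Fin (n + 1))) := by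
  constructor
  · intro h z hz w hw hne
    obtain ⟨a, ha, rfl⟩ := Finset.mem_map.mp (Finset.mem_coe.mp hz)
    obtain ⟨b, hb, rfl⟩ := Finset.mem_map.mp (Finset.mem_coe.mp hw)
    have hab : a ≠ b := fun e => hne (by rw [e])
    exact h (Finset.mem_coe.mpr ha) (Finset.mem_coe.mpr hb) hab
  · intro h a ha b hb hne
    have hne' : i.succAboveEmb a ≠ i.succAboveEmb b := fun e =>
      hne (Fin.succAbove_right_injective e)
    exact h (Finset.mem_coe.mpr (Finset.mem_map_of_mem _ (Finset.mem_coe.mp ha)))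
      (Finset.mem_coe.mpr (Finset.mem_map_of_mem _ (Finset.mem_coe.mp hb))) hne'

lemma chainSum_restrict (po : PartialOrder (Fin (n + 1))) (i : Fin (n + 1)) :
    chainSum (restrict po i) Finset.univ = chainSum po (Finset.univ.erase i) := by
  unfold chainSum
  refine Finset.sum_bij' (i := fun c _ => c.map i.succAboveEmb)
    (j := fun c _ => c.preimage i.succAbove Fin.succAbove_right_injective.injOn) ?_ ?_ ?_ ?_ ?_
  · intro c _
    refine Finset.mem_powerset.mpr fun z hz => ?_
    obtain ⟨a, _, rfl⟩ := Finset.mem_map.mp hz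
    exact Finset.mem_erase.mpr ⟨Fin.succAbove_ne i a, Finset.mem_univ _⟩
  · intro c _
    exact Finset.mem_powerset.mpr (Finset.subset_univ _)
  · intro c _
    ext a
    simp only [Finset.mem_preimage, Finset.mem_map, Fin.succAboveEmb_apply]
    constructor
    · rintro ⟨a1, h1, he⟩
      rwa [← Fin.succAbove_right_injective he]
    · intro h
      exact ⟨a, h, rfl⟩
  · intro c hc
    have hsub := Finset.mem_powerset.mp hc
    ext z
    simp only [Finset.mem_map, Finset.mem_preimage]
    constructor
    · rintro ⟨a, ha, rfl⟩
      exact ha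
    · intro hz
      have hne : z ≠ i := (Finset.mem_erase.mp (hsub hz)).1
      obtain ⟨a, rfl⟩ := Fin.exists_succAbove_eq hne
      exact ⟨a, hz, rfl⟩
  · intro c _
    rw [Finset.card_map]
    by_cases h : IsChain (restrict po i).le (↑c : Set (Fin n))
    · rw [if_pos h, if_pos ((chain_map_iff po i c).mp h)]
    · rw [if_neg h, if_neg (fun h' => h ((chain_map_iff po i c).mpr h'))]

lemma factor (po : PartialOrder (Fin n)) (i : Fin n) :
    ∑ c ∈ Finset.univ.powerset,
        (if i ∈ c ∧ IsChain po.le (↑c : Set (Fin n)) then (-1 : ℤ) ^ c.card else 0)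
      = -(chainSum po (Finset.univ.filter fun k => po.lt k i)
          * chainSum po (Finset.univ.filter fun k => po.lt i k)) := by
  have hL : ∑ c ∈ Finset.univ.powerset,
      (if i ∈ c ∧ IsChain po.le (↑c : Set (Fin n)) then (-1 : ℤ) ^ c.card else 0)
      = ∑ c ∈ Finset.univ.powerset.filter
          (fun c : Finset (Fin n) => i ∈ c ∧ IsChain po.le (↑c : Set (Fin n))),
          (-1 : ℤ) ^ c.card := by
    rw [Finset.sum_filter]
  unfold chainSum
  rw [hL, ← Finset.sum_filter, ← Finset.sum_filter, Finset.sum_mul_sum]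
  rw [← Finset.sum_product']
  rw [← Finset.sum_neg_distrib]
  refine Finset.sum_bij'
    (i := fun c _ => (c.filter (fun z => po.lt z i), c.filter (fun z => po.lt i z)))
    (j := fun p _ => insert i (p.1 ∪ p.2)) ?_ ?_ ?_ ?_ ?_
  · -- hi
    intro c hc
    obtain ⟨-, hic, hch⟩ := Finset.mem_filter.mp hc
    refine Finset.mem_product.mpr ⟨?_, ?_⟩
    · refine Finset.mem_filter.mpr ⟨Finset.mem_powerset.mpr fun z hz => ?_, ?_⟩
      · exact Finset.mem_filter.mpr ⟨Finset.mem_univ z, (Finset.mem_filter.mp hz).2⟩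
      · exact hch.mono (Finset.coe_subset.mpr (Finset.filter_subset _ _))
    · refine Finset.mem_filter.mpr ⟨Finset.mem_powerset.mpr fun z hz => ?_, ?_⟩
      · exact Finset.mem_filter.mpr ⟨Finset.mem_univ z, (Finset.mem_filter.mp hz).2⟩
      · exact hch.mono (Finset.coe_subset.mpr (Finset.filter_subset _ _))
  · -- hj
    rintro ⟨a, b⟩ hp
    obtain ⟨hA, hB⟩ := Finset.mem_product.mp hp
    obtain ⟨haD, hach⟩ := Finset.mem_filter.mp hA
    obtain ⟨hbU, hbch⟩ := Finset.mem_filter.mp hB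
    rw [Finset.mem_powerset] at haD hbU
    have halt : ∀ z ∈ a, po.lt z i := fun z hz => (Finset.mem_filter.mp (haD hz)).2
    have hblt : ∀ z ∈ b, po.lt i z := fun z hz => (Finset.mem_filter.mp (hbU hz)).2
    refine Finset.mem_filter.mpr ⟨Finset.mem_powerset.mpr (Finset.subset_univ _),
      Finset.mem_insert_self _ _, ?_⟩
    intro z hz w hw hne
    have hmem : ∀ u : Fin n, u ∈ (↑(insert i (a ∪ b)) : Set (Fin n)) →
        u = i ∨ u ∈ a ∨ u ∈ b := by
      intro u hu
      rcases Finset.mem_insert.mp (Finset.mem_coe.mp hu) with h' | h'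
      · exact Or.inl h'
      · exact Or.inr (Finset.mem_union.mp h')
    rcases hmem z hz with rfl | hz' | hz'
    · rcases hmem w hw with rfl | hw' | hw'
      · exact absurd rfl hne
      · exact Or.inr (PO.le_of_lt po (halt w hw'))
      · exact Or.inl (PO.le_of_lt po (hblt w hw'))
    · rcases hmem w hw with rfl | hw' | hw'
      · exact Or.inl (PO.le_of_lt po (halt z hz'))
      · exact hach (Finset.mem_coe.mpr hz') (Finset.mem_coe.mpr hw') hne
      · exact Or.inl (po.le_trans _ _ _ (PO.le_of_lt po (halt z hz'))
          (PO.le_of_lt po (hblt w hw')))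
    · rcases hmem w hw with rfl | hw' | hw'
      · exact Or.inr (PO.le_of_lt po (hblt z hz'))
      · exact Or.inr (po.le_trans _ _ _ (PO.le_of_lt po (halt w hw'))
          (PO.le_of_lt po (hblt z hz')))
      · exact hbch (Finset.mem_coe.mpr hz') (Finset.mem_coe.mpr hw') hne
  · -- left_inv
    intro c hc
    obtain ⟨-, hic, hch⟩ := Finset.mem_filter.mp hc
    ext z
    simp only [Finset.mem_insert, Finset.mem_union, Finset.mem_filter]
    constructor
    · rintro (rfl | ⟨hzc, -⟩ | ⟨hzc, -⟩) <;> first | exact hic | exact hzc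
    · intro hzc
      rcases eq_or_ne z i with rfl | hne
      · exact Or.inl rfl
      · rcases hch (Finset.mem_coe.mpr hzc) (Finset.mem_coe.mpr hic) hne with h' | h'
        · exact Or.inr (Or.inl ⟨hzc, PO.lt_of_le_of_ne po h' hne⟩)
        · exact Or.inr (Or.inr ⟨hzc, PO.lt_of_le_of_ne po h' (Ne.symm hne)⟩)
  · -- right_inv
    rintro ⟨a, b⟩ hp
    obtain ⟨hA, hB⟩ := Finset.mem_product.mp hp
    obtain ⟨haD, -⟩ := Finset.mem_filter.mp hA
    obtain ⟨hbU, -⟩ := Finset.mem_filter.mp hB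
    rw [Finset.mem_powerset] at haD hbU
    have halt : ∀ z ∈ a, po.lt z i := fun z hz => (Finset.mem_filter.mp (haD hz)).2
    have hblt : ∀ z ∈ b, po.lt i z := fun z hz => (Finset.mem_filter.mp (hbU hz)).2
    have h1 : (insert i (a ∪ b)).filter (fun z => po.lt z i) = a := by
      ext z
      simp only [Finset.mem_filter, Finset.mem_insert, Finset.mem_union]
      constructor
      · rintro ⟨rfl | hz | hz, hlt⟩
        · exact absurd hlt (PO.lt_irrefl po z)
        · exact hz
        · exact absurd (PO.lt_trans po (hblt z hz) hlt) (PO.lt_irrefl po i)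
      · intro hz
        exact ⟨Or.inr (Or.inl hz), halt z hz⟩
    have h2 : (insert i (a ∪ b)).filter (fun z => po.lt i z) = b := by
      ext z
      simp only [Finset.mem_filter, Finset.mem_insert, Finset.mem_union]
      constructor
      · rintro ⟨rfl | hz | hz, hlt⟩
        · exact absurd hlt (PO.lt_irrefl po z)
        · exact absurd (PO.lt_trans po hlt (halt z hz)) (PO.lt_irrefl po i)
        · exact hz
      · intro hz
        exact ⟨Or.inr (Or.inr hz), hblt z hz⟩
    exact Prod.ext h1 h2
  · -- terms
    intro c hc
    obtain ⟨-, hic, hch⟩ := Finset.mem_filter.mp hc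
    have hdisj : Disjoint (c.filter (fun z => po.lt z i)) (c.filter (fun z => po.lt i z)) := by
      rw [Finset.disjoint_left]
      intro z hz1 hz2
      exact PO.lt_irrefl po i (PO.lt_trans po (Finset.mem_filter.mp hz2).2
        (Finset.mem_filter.mp hz1).2)
    have hini : i ∉ (c.filter (fun z => po.lt z i)) ∪ (c.filter (fun z => po.lt i z)) := by
      intro hmem
      rcases Finset.mem_union.mp hmem with h' | h'
      · exact PO.lt_irrefl po i (Finset.mem_filter.mp h').2
      · exact PO.lt_irrefl po i (Finset.mem_filter.mp h').2
    have hceq : insert i ((c.filter (fun z => po.lt z i)) ∪ (c.filter (fun z => po.lt i z))) = c := by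
      ext z
      simp only [Finset.mem_insert, Finset.mem_union, Finset.mem_filter]
      constructor
      · rintro (rfl | ⟨hzc, -⟩ | ⟨hzc, -⟩) <;> first | exact hic | exact hzc
      · intro hzc
        rcases eq_or_ne z i with rfl | hne
        · exact Or.inl rfl
        · rcases hch (Finset.mem_coe.mpr hzc) (Finset.mem_coe.mpr hic) hne with h' | h'
          · exact Or.inr (Or.inl ⟨hzc, PO.lt_of_le_of_ne po h' hne⟩)
          · exact Or.inr (Or.inr ⟨hzc, PO.lt_of_le_of_ne po h' (Ne.symm hne)⟩)
    have hcard : c.card = (c.filter (fun z => po.lt z i)).card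
        + (c.filter (fun z => po.lt i z)).card + 1 := by
      conv_lhs => rw [← hceq]
      rw [Finset.card_insert_of_notMem hini, Finset.card_union_of_disjoint hdisj]
    show (-1 : ℤ) ^ c.card = -((-1 : ℤ) ^ (c.filter (fun z => po.lt z i)).card
      * (-1 : ℤ) ^ (c.filter (fun z => po.lt i z)).card)
    rw [hcard, pow_succ, pow_add]
    ring
end Stmt13Aux

/-- Removing a weak beat point (a point whose punctured down-set or punctured
up-set is contractible, i.e. dismantlable) changes the sign of the
determinant. -/
theorem stmt13 {n : ℕ} (po : PartialOrder (Fin (n + 1))) (i : Fin (n + 1))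
    (h : Dismantlable po (Finset.univ.filter fun k => po.lt k i) ∨
         Dismantlable po (Finset.univ.filter fun k => po.lt i k)) :
    (assocMatrix po).det =
      - ((assocMatrix po).submatrix i.succAbove i.succAbove).det := by
  have hz : Stmt13Aux.chainSum po (Finset.univ.filter fun k => po.lt k i) = 0 ∨
      Stmt13Aux.chainSum po (Finset.univ.filter fun k => po.lt i k) = 0 :=
    h.imp (Stmt13Aux.dismantlable_chainSum po _) (Stmt13Aux.dismantlable_chainSum po _)
  have hsum0 : ∑ c ∈ Finset.univ.powerset,
      (if i ∈ c ∧ IsChain po.le (↑c : Set (Fin (n + 1))) then (-1 : ℤ) ^ c.card else 0) = 0 := by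
    rw [Stmt13Aux.factor po i]
    rcases hz with h0 | h0 <;> rw [h0] <;> ring
  have hsub : (assocMatrix po).submatrix i.succAbove i.succAbove
      = assocMatrix (Stmt13Aux.restrict po i) := rfl
  have hsplit := Stmt13Aux.chainSum_erase po Finset.univ i (Finset.mem_univ i)
  rw [hsum0, add_zero] at hsplit
  rw [Stmt13Aux.detA po, hsub, Stmt13Aux.detA (Stmt13Aux.restrict po i),
    Stmt13Aux.chainSum_restrict po i, ← hsplit, pow_succ]
  ring
end

section
/- The characteristic polynomial of M (in Mathlib's convention, charpoly M = det(X·1 − M) ∈ ℤ[X]) equals X^n if and only if the partial order ≤ on Fin n is a total order. -/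
open scoped Classical
open Polynomial Finset

section aux
variable {n : ℕ} (po : PartialOrder (Fin n))

/-- rank function: number of strict successors -/
noncomputable def rk (i : Fin n) : ℕ :=
  (univ.filter (fun k => po.le i k ∧ i ≠ k)).card

lemma rk_strict {i j : Fin n} (hji : po.le j i) (hne : j ≠ i) : rk po i < rk po j := by
  apply Finset.card_lt_card
  constructor
  · intro k hk
    simp only [mem_filter, mem_univ, true_and] at hk ⊢
    refine ⟨po.le_trans _ _ _ hji hk.1, ?_⟩
    rintro rfl
    exact hne (po.le_antisymm _ _ hji hk.1)
  · intro hsub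
    have : i ∈ univ.filter (fun k => po.le j k ∧ j ≠ k) := by
      simp only [mem_filter, mem_univ, true_and]; exact ⟨hji, hne⟩
    have := hsub this
    simp only [mem_filter, mem_univ, true_and] at this
    exact this.2 rfl

lemma nilp_of_total (h : ∀ i j : Fin n, po.le i j ∨ po.le j i) :
    (assocMatrix po).charpoly = Polynomial.X ^ n := by
  have hbt : (assocMatrix po).BlockTriangular (rk po) := by
    intro i j hij
    simp only [assocMatrix, Matrix.of_apply]
    by_cases hle : po.le i j
    · simp [hle]
    · exfalso
      rcases h i j with h' | h'
      · exact hle h'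
      · have hne : j ≠ i := by rintro rfl; exact hle (po.le_refl _)
        exact absurd (rk_strict po h' hne) (not_lt.mpr hij.le)
  have hinj : Function.Injective (rk po) := by
    intro i j hij
    by_contra hne
    rcases h i j with h' | h'
    · exact absurd (rk_strict po h' hne) (by omega)
    · exact absurd (rk_strict po h' (fun e => hne e.symm)) (by omega)
  rw [hbt.charpoly]
  have hblock : ∀ a ∈ (univ : Finset (Fin n)).image (rk po),
      ((assocMatrix po).toSquareBlock (rk po) a).charpoly
        = X ^ Fintype.card {i // rk po i = a} := by
    intro a _
    have : (assocMatrix po).toSquareBlock (rk po) a = 0 := by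
      ext ⟨i, hi⟩ ⟨j, hj⟩
      have : i = j := hinj (hi.trans hj.symm)
      subst this
      simp [Matrix.toSquareBlock_def, assocMatrix, po.le_refl]
    rw [this]
    simp [Matrix.charpoly, Matrix.charmatrix]
  rw [Finset.prod_congr rfl hblock, Finset.prod_pow_eq_pow_sum]
  congr 1
  have : ∀ a, Fintype.card {i // rk po i = a}
      = (univ.filter (fun i => rk po i = a)).card := fun a => Fintype.card_subtype _
  simp_rw [this]
  rw [← Finset.card_eq_sum_card_image]
  simp
end aux

/-- The characteristic polynomial of the associated matrix is `X ^ n` iff the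
order is total. -/



theorem stmt14 {n : ℕ} (po : PartialOrder (Fin n)) :
    (assocMatrix po).charpoly = Polynomial.X ^ n ↔
      ∀ i j : Fin n, po.le i j ∨ po.le j i := by
  constructor
  · intro h i j
    set M := assocMatrix po with hM
    have hn : M ^ n = 0 := by
      have := Matrix.aeval_self_charpoly M
      rwa [h, map_pow, aeval_X] at this
    have hnil : IsNilpotent (M * M) := ⟨n, by rw [← pow_two, ← pow_mul, mul_comm 2 n, pow_mul, hn, zero_pow (by norm_num)]⟩
    have htr : Matrix.trace (M * M) = 0 :=
      (Matrix.isNilpotent_trace_of_isNilpotent hnil).eq_zero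
    rw [Matrix.trace] at htr
    have hnneg : ∀ i j : Fin n, 0 ≤ M i j * M j i := by
      intro i j
      have h1 : (0:ℤ) ≤ M i j := by simp only [hM, assocMatrix, Matrix.of_apply]; split <;> norm_num
      have h2 : (0:ℤ) ≤ M j i := by simp only [hM, assocMatrix, Matrix.of_apply]; split <;> norm_num
      positivity
    have hd : ∀ i ∈ (univ : Finset (Fin n)), (0:ℤ) ≤ Matrix.diag (M * M) i := by
      intro i _
      rw [Matrix.diag_apply, Matrix.mul_apply]
      exact Finset.sum_nonneg fun j _ => hnneg i j
    have := (Finset.sum_eq_zero_iff_of_nonneg hd).mp htr i (mem_univ i)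
    rw [Matrix.diag_apply, Matrix.mul_apply] at this
    have hz := (Finset.sum_eq_zero_iff_of_nonneg (fun j _ => hnneg i j)).mp this j (mem_univ j)
    by_contra hc
    push_neg at hc
    simp only [hM, assocMatrix, Matrix.of_apply, if_neg hc.1, if_neg hc.2] at hz
    norm_num at hz
  · exact nilp_of_total po
end

section
/- Let n ≥ 2 and let ≤ be the fence order on Fin n, defined by i ≤ j iff i = j, or (Even (i : ℕ) and (j : ℕ) = i + 1), or (Even (i : ℕ) and (i : ℕ) = j + 1) — i.e., the zigzag x₀ < x₁ > x₂ < x₃ > ⋯ in which even-indexed points are minimal and odd-indexed points are maximal. Then the characteristic polynomial of its associated matrix M (in Mathlib's convention det(X·1 − M) ∈ ℤ[X]) equals X · (X − (n − 2)) · (X + 1)^(n−2). -/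
open scoped Classical
open Polynomial Matrix

lemma aux_det_smul_one_sub {n : ℕ} {K : Type*} [Field K] (P : Matrix (Fin n) (Fin n) K) (c : K) :
    (c • (1 : Matrix (Fin n) (Fin n) K) - P).det = P.charpoly.eval c := by
  rw [Matrix.charpoly, ← Polynomial.coe_evalRingHom, RingHom.map_det]
  congr 1
  ext i j
  by_cases h : i = j <;>
    simp [h, Matrix.charmatrix_apply, Matrix.one_apply, Matrix.diagonal_apply]

lemma aux_charpoly_nilp {n : ℕ} {K : Type*} [Field K] (P : Matrix (Fin n) (Fin n) K)
    (hP : P * P = 0) : P.charpoly = X ^ n := by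
  have hnil : IsNilpotent P := ⟨2, by rwa [pow_two]⟩
  have h := Matrix.isNilpotent_charpoly_sub_pow_of_isNilpotent hnil
  have h0 : P.charpoly - X ^ (Fintype.card (Fin n)) = 0 := h.eq_zero
  rw [Fintype.card_fin] at h0
  exact sub_eq_zero.mp h0

lemma aux_sum {K : Type*} [Field K] (n : ℕ) (hn : 1 ≤ n) :
    ∑ i ∈ Finset.range n, ∑ j ∈ Finset.range n,
      (if Even i ∧ (j = i + 1 ∨ i = j + 1) then (1 : K) else 0) = n - 1 := by
  induction n, hn using Nat.le_induction with
  | base => rw [Finset.sum_range_one, Finset.sum_range_one]; norm_num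
  | succ n hn ih =>
    have hrow : ∑ j ∈ Finset.range (n+1),
        (if Even n ∧ (j = n + 1 ∨ n = j + 1) then (1 : K) else 0)
        = if Even n then 1 else 0 := by
      have key : ∀ j ∈ Finset.range (n+1),
          (if Even n ∧ (j = n + 1 ∨ n = j + 1) then (1 : K) else 0)
          = if j = n - 1 then (if Even n then 1 else 0) else 0 := by
        intro j hj
        simp only [Finset.mem_range] at hj
        by_cases he : Even n
        · have h2 := Nat.even_iff.mp he
          have hiff : (Even n ∧ (j = n + 1 ∨ n = j + 1)) ↔ j = n - 1 := by
            constructor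
            · rintro ⟨-, h⟩; omega
            · intro h; exact ⟨he, by omega⟩
          rw [if_congr hiff rfl rfl]; simp [he]
        · simp [he]
      rw [Finset.sum_congr rfl key, Finset.sum_ite_eq' (Finset.range (n+1)) (n-1)]
      simp [(by omega : n - 1 < n + 1)]
    have hcol : ∑ i ∈ Finset.range n,
        (if Even i ∧ (n = i + 1 ∨ i = n + 1) then (1 : K) else 0)
        = if Even n then 0 else 1 := by
      have key : ∀ i ∈ Finset.range n,
          (if Even i ∧ (n = i + 1 ∨ i = n + 1) then (1 : K) else 0)
          = if i = n - 1 then (if Even n then 0 else 1) else 0 := by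
        intro i hi
        simp only [Finset.mem_range] at hi
        by_cases he : Even n
        · have h2 := Nat.even_iff.mp he
          have : ¬ (Even i ∧ (n = i + 1 ∨ i = n + 1)) := by
            rintro ⟨hei, h⟩
            have := Nat.even_iff.mp hei
            omega
          simp [this, he]
        · have h2 := Nat.odd_iff.mp (Nat.not_even_iff_odd.mp he)
          have hiff : (Even i ∧ (n = i + 1 ∨ i = n + 1)) ↔ i = n - 1 := by
            constructor
            · rintro ⟨hei, h⟩; omega
            · intro h
              refine ⟨?_, by omega⟩
              rw [Nat.even_iff]; omega
          rw [if_congr hiff rfl rfl]; simp [he]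
      rw [Finset.sum_congr rfl key, Finset.sum_ite_eq' (Finset.range n) (n-1)]
      simp [(by omega : n - 1 < n)]
    rw [Finset.sum_range_succ]
    have hsplit : ∀ i ∈ Finset.range n, ∑ j ∈ Finset.range (n+1),
        (if Even i ∧ (j = i + 1 ∨ i = j + 1) then (1 : K) else 0)
        = (∑ j ∈ Finset.range n,
          (if Even i ∧ (j = i + 1 ∨ i = j + 1) then (1 : K) else 0))
          + (if Even i ∧ (n = i + 1 ∨ i = n + 1) then (1 : K) else 0) := by
      intro i _
      rw [Finset.sum_range_succ]
    rw [Finset.sum_congr rfl hsplit, Finset.sum_add_distrib, ih, hcol, hrow]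
    by_cases he : Even n <;> simp [he]

set_option maxHeartbeats 1000000 in
set_option synthInstance.maxHeartbeats 400000 in
/-- The characteristic polynomial of the matrix of a fence with `n ≥ 2` points
is `X (X - (n - 2)) (X + 1) ^ (n - 2)`. -/
theorem stmt15 {n : ℕ} (hn : 2 ≤ n) (po : PartialOrder (Fin n))
    (hle : ∀ i j : Fin n, po.le i j ↔
      i = j ∨ (Even (i : ℕ) ∧ (j : ℕ) = (i : ℕ) + 1) ∨
        (Even (i : ℕ) ∧ (i : ℕ) = (j : ℕ) + 1)) :
    (assocMatrix po).charpoly =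
      Polynomial.X * (Polynomial.X - Polynomial.C ((n : ℤ) - 2)) *
        (Polynomial.X + 1) ^ (n - 2) := by
  set K := FractionRing (Polynomial ℤ)
  set φ : Polynomial ℤ →+* K := algebraMap (Polynomial ℤ) K with hφ
  have hφinj : Function.Injective φ := IsFractionRing.injective _ _
  set t : K := φ X with ht
  set c : K := t + 1 with hcdef
  have hc : c ≠ 0 := by
    have h1 : c = φ (X + 1) := by rw [map_add, _root_.map_one]
    intro h
    have : (X + 1 : Polynomial ℤ) = 0 := hφinj (by rw [← h1, h, map_zero])
    have := congrArg (Polynomial.eval 0) this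
    simp at this
  set M : Matrix (Fin n) (Fin n) ℤ := assocMatrix po with hM
  set N : Matrix (Fin n) (Fin n) K := Matrix.of (fun i j =>
    if Even (i : ℕ) ∧ ((j : ℕ) = (i : ℕ) + 1 ∨ (i : ℕ) = (j : ℕ) + 1)
    then 1 else 0) with hN
  set u : Fin n → K := fun _ => 1 with hu
  set A : Matrix (Fin n) (Fin n) K := c • 1 + N with hA
  set Ai : Matrix (Fin n) (Fin n) K := c⁻¹ • 1 - (c * c)⁻¹ • N with hAi
  have hN2 : N * N = 0 := by
    ext i j
    rw [Matrix.mul_apply, Matrix.zero_apply]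
    apply Finset.sum_eq_zero
    intro k _
    rcases Nat.even_or_odd (k : ℕ) with he | ho
    · have : ¬ (Even (i:ℕ) ∧ ((k:ℕ) = (i:ℕ) + 1 ∨ (i:ℕ) = (k:ℕ) + 1)) := by
        rintro ⟨hi, h⟩
        rw [Nat.even_iff] at hi he
        omega
      simp [hN, this]
    · have : ¬ (Even (k:ℕ) ∧ ((j:ℕ) = (k:ℕ) + 1 ∨ (k:ℕ) = (j:ℕ) + 1)) := by
        rintro ⟨hk, h⟩
        rw [Nat.even_iff] at hk
        rw [Nat.odd_iff] at ho
        omega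
      simp [hN, this]
  have hAAi : A * Ai = 1 := by
    rw [hA, hAi, Matrix.add_mul, Matrix.mul_sub, Matrix.mul_sub, Matrix.smul_mul,
      Matrix.smul_mul, Matrix.mul_smul, Matrix.mul_smul, Matrix.mul_smul, Matrix.mul_smul,
      Matrix.one_mul, Matrix.mul_one, hN2, smul_zero, sub_zero, smul_smul, smul_smul,
      mul_inv_cancel₀ hc]
    have h2 : c * (c * c)⁻¹ = c⁻¹ := by rw [mul_inv, ← mul_assoc, mul_inv_cancel₀ hc, one_mul]
    rw [h2, one_smul]
    simp only [Matrix.one_mul]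
    abel
  have hcolrow : ∀ i j : Fin n, (Matrix.replicateCol Unit u * Matrix.replicateRow Unit u) i j = 1 := by
    intro i j
    rw [Matrix.mul_apply]
    simp [hu]
  have h1 : (Matrix.charmatrix M).map φ = A - Matrix.replicateCol Unit u * Matrix.replicateRow Unit u := by
    ext i j
    rw [Matrix.map_apply, Matrix.charmatrix_apply, Matrix.sub_apply, hcolrow i j, hA,
      Matrix.add_apply, Matrix.smul_apply]
    by_cases hij : i = j
    · subst hij
      have hMii : M i i = 0 := by
        rw [hM]
        show (if po.le i i then (0:ℤ) else 1) = 0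
        rw [if_pos ((hle i i).mpr (Or.inl rfl))]
      have hNii : N i i = (0:K) := by
        show (if Even (i:ℕ) ∧ ((i:ℕ) = (i:ℕ) + 1 ∨ (i:ℕ) = (i:ℕ) + 1) then (1:K) else 0) = 0
        rw [if_neg]
        rintro ⟨-, h | h⟩ <;> omega
      rw [hMii, hNii]
      simp [ht, hcdef]
    · have hdiag : (Matrix.diagonal fun _ : Fin n => (X : Polynomial ℤ)) i j = 0 :=
        Matrix.diagonal_apply_ne _ hij
      have hone : (1 : Matrix (Fin n) (Fin n) K) i j = 0 := Matrix.one_apply_ne hij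
      have hvij : (i:ℕ) ≠ (j:ℕ) := fun h => hij (Fin.val_injective h)
      rw [hdiag, hone]
      by_cases hcond : Even (i:ℕ) ∧ ((j:ℕ) = (i:ℕ) + 1 ∨ (i:ℕ) = (j:ℕ) + 1)
      · have hleij : po.le i j := by
          rcases hcond with ⟨he, hor | hor⟩
          · exact (hle i j).mpr (Or.inr (Or.inl ⟨he, hor⟩))
          · exact (hle i j).mpr (Or.inr (Or.inr ⟨he, hor⟩))
        have hMij : M i j = 0 := by
          rw [hM]
          show (if po.le i j then (0:ℤ) else 1) = 0
          rw [if_pos hleij]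
        have hNij : N i j = (1:K) := by
          show (if Even (i:ℕ) ∧ ((j:ℕ) = (i:ℕ) + 1 ∨ (i:ℕ) = (j:ℕ) + 1) then (1:K) else 0) = 1
          rw [if_pos hcond]
        rw [hMij, hNij]
        simp
      · have hnle : ¬ po.le i j := by
          rw [hle]
          rintro (h | h | h)
          · exact hij h
          · exact hcond ⟨h.1, Or.inl h.2⟩
          · exact hcond ⟨h.1, Or.inr h.2⟩
        have hMij : M i j = 1 := by
          rw [hM]
          show (if po.le i j then (0:ℤ) else 1) = 1
          rw [if_neg hnle]
        have hNij : N i j = (0:K) := by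
          show (if Even (i:ℕ) ∧ ((j:ℕ) = (i:ℕ) + 1 ∨ (i:ℕ) = (j:ℕ) + 1) then (1:K) else 0) = 0
          rw [if_neg hcond]
        rw [hMij, hNij]
        simp
  have hfact : A - Matrix.replicateCol Unit u * Matrix.replicateRow Unit u
      = A * (1 + Matrix.replicateCol Unit (-(Ai *ᵥ u)) * Matrix.replicateRow Unit u) := by
    have hcolneg : Matrix.replicateCol Unit (-(Ai *ᵥ u)) = -Matrix.replicateCol Unit (Ai *ᵥ u) := by
      ext i k
      simp
    rw [Matrix.mul_add, Matrix.mul_one, hcolneg, Matrix.neg_mul, Matrix.mul_neg,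
      ← Matrix.mul_assoc, ← Matrix.replicateCol_mulVec, Matrix.mulVec_mulVec, hAAi,
      Matrix.one_mulVec, ← sub_eq_add_neg]
  have hdetA : A.det = c ^ n := by
    have h3 : A = c • (1 : Matrix (Fin n) (Fin n) K) - (-N) := by
      rw [sub_neg_eq_add, hA]
    rw [h3, aux_det_smul_one_sub, aux_charpoly_nilp _ (by rw [neg_mul_neg, hN2]),
      Polynomial.eval_pow, Polynomial.eval_X]
  have huu : u ⬝ᵥ u = (n : K) := by
    simp [hu, dotProduct, Finset.card_univ]
  have hNu : u ⬝ᵥ (N *ᵥ u) = (n : K) - 1 := by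
    have hn1 : 1 ≤ n := by omega
    have hexp : u ⬝ᵥ (N *ᵥ u) = ∑ i : Fin n, ∑ j : Fin n,
        (if Even (i:ℕ) ∧ ((j:ℕ) = (i:ℕ) + 1 ∨ (i:ℕ) = (j:ℕ) + 1) then (1:K) else 0) := by
      simp [dotProduct, Matrix.mulVec, hu, hN]
    rw [hexp]
    have hinner : ∀ i : Fin n, ∑ j : Fin n,
        (if Even (i:ℕ) ∧ ((j:ℕ) = (i:ℕ) + 1 ∨ (i:ℕ) = (j:ℕ) + 1) then (1:K) else 0)
        = ∑ j ∈ Finset.range n,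
          (if Even (i:ℕ) ∧ (j = (i:ℕ) + 1 ∨ (i:ℕ) = j + 1) then (1:K) else 0) :=
      fun i => Fin.sum_univ_eq_sum_range
        (fun j => if Even (i:ℕ) ∧ (j = (i:ℕ) + 1 ∨ (i:ℕ) = j + 1) then (1:K) else 0) n
    rw [Finset.sum_congr rfl (fun i _ => hinner i),
      Fin.sum_univ_eq_sum_range (fun i => ∑ j ∈ Finset.range n,
        (if Even i ∧ (j = i + 1 ∨ i = j + 1) then (1:K) else 0)) n]
    exact aux_sum n hn1
  have hdot : u ⬝ᵥ (Ai *ᵥ u) = c⁻¹ * n - (c * c)⁻¹ * ((n : K) - 1) := by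
    rw [hAi, Matrix.sub_mulVec, Matrix.smul_mulVec, Matrix.smul_mulVec,
      Matrix.one_mulVec, dotProduct_sub, dotProduct_smul, dotProduct_smul, huu, hNu,
      smul_eq_mul, smul_eq_mul]
  have hφchar : φ M.charpoly = c ^ n * (1 - (c⁻¹ * n - (c * c)⁻¹ * ((n : K) - 1))) := by
    rw [Matrix.charpoly, RingHom.map_det, RingHom.mapMatrix_apply, h1, hfact, Matrix.det_mul, hdetA,
      Matrix.det_one_add_replicateCol_mul_replicateRow, dotProduct_neg, hdot, ← sub_eq_add_neg]
  have hφrhs : φ (Polynomial.X * (Polynomial.X - Polynomial.C ((n : ℤ) - 2)) *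
      (Polynomial.X + 1) ^ (n - 2)) = t * (t - ((n : K) - 2)) * c ^ (n - 2) := by
    have hCn : φ (Polynomial.C ((n:ℤ) - 2)) = (n : K) - 2 := by
      have h := eq_intCast (φ.comp Polynomial.C) ((n:ℤ) - 2)
      simp only [RingHom.coe_comp, Function.comp_apply] at h
      rw [h]
      push_cast
      ring
    rw [_root_.map_mul, _root_.map_mul, map_sub, map_pow, map_add, _root_.map_one, hCn,
      ← ht, ← hcdef]
  apply hφinj
  rw [hφchar, hφrhs]
  have htc : t = c - 1 := by rw [hcdef]; ring
  have hpow : c ^ n = c ^ (n - 2) * c ^ 2 := by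
    rw [← pow_add]
    congr 1
    omega
  rw [htc, hpow]
  have hci : c * c⁻¹ = 1 := mul_inv_cancel₀ hc
  rw [mul_inv]
  linear_combination c ^ (n - 2) * (-c * (n : K) + ((n : K) - 1) * (c * c⁻¹ + 1)) * hci
end

section
/- If the poset (Fin n, ≤) has a greatest element m (or, dually, a least element m), then the characteristic polynomial of M (in Mathlib's convention det(X·1 − M) ∈ ℤ[X]) equals X · charpoly(M∖m), where M∖m is the matrix obtained from M by deleting row m and column m. -/
open scoped Classical

lemma charmatrix_submatrix_succAbove {n : ℕ} (A : Matrix (Fin (n + 1)) (Fin (n + 1)) ℤ)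
    (m : Fin (n + 1)) :
    (Matrix.charmatrix A).submatrix m.succAbove m.succAbove =
      Matrix.charmatrix (A.submatrix m.succAbove m.succAbove) := by
  ext i j
  simp only [Matrix.submatrix_apply]
  by_cases hij : i = j
  · subst hij
    rw [Matrix.charmatrix_apply_eq, Matrix.charmatrix_apply_eq, Matrix.submatrix_apply]
  · rw [Matrix.charmatrix_apply_ne _ _ _ (fun h => hij (m.succAbove_right_injective h)),
      Matrix.charmatrix_apply_ne _ _ _ hij, Matrix.submatrix_apply]

lemma aux_col {n : ℕ} (A : Matrix (Fin (n + 1)) (Fin (n + 1)) ℤ) (m : Fin (n + 1))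
    (h : ∀ i, A i m = 0) :
    A.charpoly = Polynomial.X * (A.submatrix m.succAbove m.succAbove).charpoly := by
  rw [Matrix.charpoly, Matrix.det_succ_column _ m, Finset.sum_eq_single m]
  · rw [Matrix.charmatrix_apply_eq, h m, map_zero, sub_zero, Even.neg_one_pow ⟨(m:ℕ), rfl⟩,
      one_mul, charmatrix_submatrix_succAbove, Matrix.charpoly]
  · intro i _ hi
    rw [Matrix.charmatrix_apply_ne _ _ _ hi, h i, map_zero, neg_zero, mul_zero, zero_mul]
  · intro h'; exact absurd (Finset.mem_univ m) h'

lemma charpoly_transp {k : ℕ} (B : Matrix (Fin k) (Fin k) ℤ) :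
    (Matrix.transpose B).charpoly = B.charpoly := by
  rw [Matrix.charpoly, Matrix.charpoly,
    ← Matrix.det_transpose (Matrix.charmatrix (Matrix.transpose B))]
  congr 1
  ext i j
  by_cases hij : i = j
  · subst hij; simp [Matrix.charmatrix_apply_eq]
  · rw [Matrix.transpose_apply, Matrix.charmatrix_apply_ne _ _ _ (Ne.symm hij),
      Matrix.charmatrix_apply_ne _ _ _ hij, Matrix.transpose_apply]

lemma aux_row {n : ℕ} (A : Matrix (Fin (n + 1)) (Fin (n + 1)) ℤ) (m : Fin (n + 1))
    (h : ∀ j, A m j = 0) :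
    A.charpoly = Polynomial.X * (A.submatrix m.succAbove m.succAbove).charpoly := by
  have := aux_col (Matrix.transpose A) m (fun i => h i)
  rw [charpoly_transp] at this
  rw [this, ← Matrix.transpose_submatrix, charpoly_transp]

/-- If the poset has a greatest element `m` (or, dually, a least element `m`),
then the characteristic polynomial of `M` is `X` times the characteristic
polynomial of the matrix with the row and column of `m` deleted. -/
theorem stmt16 {n : ℕ} (po : PartialOrder (Fin (n + 1))) (m : Fin (n + 1))
    (h : (∀ k, po.le k m) ∨ (∀ k, po.le m k)) :
    (assocMatrix po).charpoly =
      Polynomial.X *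
        ((assocMatrix po).submatrix m.succAbove m.succAbove).charpoly := by
  rcases h with h | h
  · exact aux_col _ m (fun i => by simp [assocMatrix, h i])
  · exact aux_row _ m (fun j => by simp [assocMatrix, h j])
end

section
/- The determinant of M + 1 (the associated matrix plus the n×n identity matrix, over ℤ) equals 1 if the partial order ≤ on Fin n is a total order, and equals 0 if ≤ is not a total order. -/
open scoped Classical

lemma assocMatrix_add_one_apply {n : ℕ} (po : PartialOrder (Fin n)) (i j : Fin n) :
    (assocMatrix po + 1) i j =
      (if po.le i j then 0 else 1) + (if i = j then 1 else 0) := by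
  simp [assocMatrix, Matrix.add_apply, Matrix.one_apply]

/-- A finite non-total poset has two incomparable points with the same strict up-set. -/
lemma exists_same_upset {α : Type*} [Fintype α] (po : PartialOrder α)
    (h : ¬ (∀ i j : α, po.le i j ∨ po.le j i)) :
    ∃ a b : α, ¬ po.le a b ∧ ¬ po.le b a ∧ ∀ x, (po.lt a x ↔ po.lt b x) := by
  letI := po
  push_neg at h
  obtain ⟨i, j, hij, hji⟩ := h
  set S : Finset (α × α) :=
    Finset.univ.filter (fun p => ¬ po.le p.1 p.2 ∧ ¬ po.le p.2 p.1) with hS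
  have hSmem : ∀ p : α × α, p ∈ S ↔ ¬ po.le p.1 p.2 ∧ ¬ po.le p.2 p.1 := by
    intro p; simp [hS]
  set up : α → ℕ := fun a => (Finset.univ.filter (fun x => po.lt a x)).card with hup
  have hne : S.Nonempty := ⟨(i, j), (hSmem _).2 ⟨hij, hji⟩⟩
  obtain ⟨p, hpS, hmin⟩ := S.exists_min_image (fun p => up p.1 + up p.2) hne
  obtain ⟨hab, hba⟩ := (hSmem p).1 hpS
  refine ⟨p.1, p.2, hab, hba, fun x => ?_⟩
  -- key step: if `a < x` but `¬ b < x`, then `(x, b)` is an incomparable pair with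
  -- strictly smaller up-set.
  have key : ∀ a b : α, ¬ po.le a b → ¬ po.le b a → po.lt a x → ¬ po.lt b x →
      ((x, b) ∈ S ∧ up x < up a) := by
    intro a b hab hba hax hbx
    have hax' : po.le a x := le_of_lt hax
    have hxb : ¬ po.le x b := fun hxb => hab (le_trans hax' hxb)
    have hbx' : ¬ po.le b x := by
      intro hbx'
      rcases eq_or_ne b x with rfl | hne
      · exact hab hax'
      · exact hbx (lt_of_le_of_ne hbx' hne)
    refine ⟨(hSmem _).2 ⟨hxb, hbx'⟩, ?_⟩
    apply Finset.card_lt_card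
    constructor
    · intro y hy
      simp only [Finset.mem_filter, Finset.mem_univ, true_and] at hy ⊢
      exact lt_trans hax hy
    · intro hsub
      have hx : x ∈ Finset.univ.filter (fun y => po.lt a y) := by
        simp only [Finset.mem_filter, Finset.mem_univ, true_and]; exact hax
      have := hsub hx
      simp only [Finset.mem_filter, Finset.mem_univ, true_and] at this
      exact lt_irrefl _ this
  constructor
  · intro hax
    by_contra hbx
    obtain ⟨hmem, hlt⟩ := key p.1 p.2 hab hba hax hbx
    exact absurd (hmin _ hmem) (Nat.not_le.2 (Nat.add_lt_add_right hlt _))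
  · intro hbx
    by_contra hax
    obtain ⟨hmem, hlt⟩ := key p.2 p.1 hba hab hbx hax
    refine absurd (hmin _ hmem) (Nat.not_le.2 ?_)
    calc up x + up p.1 = up p.1 + up x := Nat.add_comm _ _
      _ < up p.1 + up p.2 := Nat.add_lt_add_left hlt _

/-- `det (M + I)` is `1` if the order is total and `0` otherwise. -/
theorem stmt17 {n : ℕ} (po : PartialOrder (Fin n)) :
    ((∀ i j : Fin n, po.le i j ∨ po.le j i) → (assocMatrix po + 1).det = 1) ∧
      (¬ (∀ i j : Fin n, po.le i j ∨ po.le j i) →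
        (assocMatrix po + 1).det = 0) := by
  have po_le_of_lt : ∀ {x y : Fin n}, po.lt x y → po.le x y := fun {x y} h =>
    ((po.lt_iff_le_not_ge x y).1 h).1
  have po_lt_of_le_ne : ∀ {x y : Fin n}, po.le x y → x ≠ y → po.lt x y := by
    intro x y hxy hne
    exact (po.lt_iff_le_not_ge x y).2 ⟨hxy, fun hyx => hne (po.le_antisymm _ _ hxy hyx)⟩
  constructor
  · intro h
    haveI : IsTrans (Fin n) po.lt := ⟨fun _ _ _ h1 h2 => lt_trans h1 h2⟩
    haveI : IsIrrefl (Fin n) po.lt := ⟨fun a h => lt_irrefl a h⟩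
    haveI : IsTrichotomous (Fin n) po.lt := by
      constructor
      intro a b
      rcases Classical.em (a = b) with rfl | hne
      · exact fun _ _ => rfl
      · rcases h a b with hle | hle
        · exact fun h1 _ => absurd (po_lt_of_le_ne hle hne) h1
        · exact fun _ h2 => absurd (po_lt_of_le_ne hle (Ne.symm hne)) h2
    haveI hsto : IsStrictTotalOrder (Fin n) po.lt := ⟨⟩
    haveI hdec : DecidableRel po.lt := fun a b => Classical.dec _
    letI L : LinearOrder (Fin n) := linearOrderOfSTO po.lt
    have hle : ∀ x y : Fin n, L.le x y ↔ po.le x y := by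
      intro x y
      show (x = y ∨ po.lt x y) ↔ po.le x y
      constructor
      · rintro (rfl | hlt)
        · exact po.le_refl x
        · exact po_le_of_lt hlt
      · intro hxy
        rcases Classical.em (x = y) with rfl | hne
        · exact Or.inl rfl
        · exact Or.inr (po_lt_of_le_ne hxy hne)
    have htri : @Matrix.BlockTriangular ((Fin n)ᵒᵈ) (Fin n) ℤ
        (@OrderDual.instLT (Fin n) (@Preorder.toLT (Fin n) (@PartialOrder.toPreorder (Fin n)
          (@LinearOrder.toPartialOrder (Fin n) L)))) _ (assocMatrix po + 1)
        (@OrderDual.toDual (Fin n)) := by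
      intro i j hij
      have hlt : po.lt i j := hij
      rw [assocMatrix_add_one_apply]
      have h1 : po.le i j := po_le_of_lt hlt
      have h2 : i ≠ j := by
        rintro rfl
        exact lt_irrefl i hlt
      simp [h1, h2]
    rw [Matrix.det_of_lowerTriangular (assocMatrix po + 1) htri]
    apply Finset.prod_eq_one
    intro i _
    rw [assocMatrix_add_one_apply]
    simp [po.le_refl]
  · intro h
    obtain ⟨a, b, hab, hba, hup⟩ := exists_same_upset po h
    have hne : a ≠ b := by
      rintro rfl; exact hab (po.le_refl a)
    apply Matrix.det_zero_of_row_eq hne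
    funext k
    rw [assocMatrix_add_one_apply, assocMatrix_add_one_apply]
    rcases eq_or_ne k a with rfl | hka
    · simp [po.le_refl, hba, hne, Ne.symm hne]
    · rcases eq_or_ne k b with rfl | hkb
      · simp [po.le_refl, hab, hne]
      · have hiff : po.le a k ↔ po.le b k := by
          constructor
          · intro hak
            exact po_le_of_lt ((hup k).1 (po_lt_of_le_ne hak (Ne.symm hka)))
          · intro hbk
            exact po_le_of_lt ((hup k).2 (po_lt_of_le_ne hbk (Ne.symm hkb)))
        simp [hiff, Ne.symm hka, Ne.symm hkb]
end

section
/- Let σ : Fin n → Fin n be an order automorphism of (Fin n, ≤) (a bijection with i ≤ j ↔ σ i ≤ σ j) satisfying σ ∘ σ = id and σ i ≠ i for all i (a free ℤ₂-action). Then n = 2m for some m, and for every f : Fin m → Fin n such that the map Fin m ⊕ Fin m → Fin n sending inl i to f i and inr i to σ (f i) is a bijection, the matrices A, B : Matrix (Fin m) (Fin m) ℤ defined by A i j = M (f i) (f j) and B i j = M (f i) (σ (f j)) satisfy det M = det (A + B) · det (A − B). -/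
open scoped Classical

lemma detblock {m : ℕ} (A B : Matrix (Fin m) (Fin m) ℤ) :
    (Matrix.fromBlocks A B B A).det = (A + B).det * (A - B).det := by
  let one : Matrix (Fin m) (Fin m) ℤ := 1
  let zero : Matrix (Fin m) (Fin m) ℤ := 0
  have h : Matrix.fromBlocks one zero one one * Matrix.fromBlocks A B B A *
      Matrix.fromBlocks one zero (-one) one = Matrix.fromBlocks (A - B) B zero (A + B) := by
    rw [Matrix.fromBlocks_multiply, Matrix.fromBlocks_multiply]
    have hcongr : ∀ {W X Y Z W' X' Y' Z' : Matrix (Fin m) (Fin m) ℤ}, W = W' → X = X' →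
        Y = Y' → Z = Z' →
        Matrix.fromBlocks W X Y Z = Matrix.fromBlocks W' X' Y' Z' := by
      rintro _ _ _ _ _ _ _ _ rfl rfl rfl rfl; rfl
    apply hcongr <;> simp only [one, zero] <;> noncomm_ring
  have hP : (Matrix.fromBlocks one zero one one).det = 1 := by
    rw [Matrix.det_fromBlocks_zero₁₂ one one one]; simp [one]
  have hQ : (Matrix.fromBlocks one zero (-one) one).det = 1 := by
    rw [Matrix.det_fromBlocks_zero₁₂ one (-one) one]; simp [one]
  have := congrArg Matrix.det h
  rw [Matrix.det_mul, Matrix.det_mul, hP, hQ, one_mul, mul_one,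
    Matrix.det_fromBlocks_zero₂₁ (A - B) B (A + B)] at this
  rw [this, mul_comm]

/-- For a free `ℤ₂`-action by order automorphisms, the matrix is a 2×2 block
matrix with blocks `A`, `B` (in any labelling adapted to the action) and
`det M = det (A + B) * det (A - B)`. -/
theorem stmt19 {n : ℕ} (po : PartialOrder (Fin n)) (σ : Fin n → Fin n)
    (hbij : Function.Bijective σ)
    (hord : ∀ i j : Fin n, po.le i j ↔ po.le (σ i) (σ j))
    (hinv : σ ∘ σ = id) (hfree : ∀ i, σ i ≠ i) :
    (∃ m, n = 2 * m) ∧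
      ∀ (m : ℕ) (f : Fin m → Fin n),
        Function.Bijective
          (Sum.elim f (fun i => σ (f i)) : Fin m ⊕ Fin m → Fin n) →
        (assocMatrix po).det =
          (Matrix.of fun i j : Fin m =>
              assocMatrix po (f i) (f j) + assocMatrix po (f i) (σ (f j))).det *
            (Matrix.of fun i j : Fin m =>
              assocMatrix po (f i) (f j) - assocMatrix po (f i) (σ (f j))).det := by
  have hσσ : ∀ x, σ (σ x) = x := fun x => congrFun hinv x
  have hM : ∀ a b, assocMatrix po (σ a) (σ b) = assocMatrix po a b := by
    intro a b
    simp only [assocMatrix, Matrix.of_apply]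
    rw [← hord]
  constructor
  · -- n is even
    have hfact : Fact (Nat.Prime 2) := ⟨Nat.prime_two⟩
    let F : Function.End (Fin n) := σ
    have hpow : F ^ 2 ^ 1 = 1 := by
      rw [pow_one, sq]
      exact hinv
    have hmod := Equiv.Perm.card_fixedPoints_modEq (f := F) hpow
    have hempty : Fintype.card (Function.fixedPoints F) = 0 := by
      simp only [Fintype.card_eq_zero_iff]
      constructor
      rintro ⟨x, hx⟩
      exact hfree x hx
    rw [hempty, Fintype.card_fin] at hmod
    have h2 : 2 ∣ n := (Nat.modEq_zero_iff_dvd).mp hmod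
    exact h2
  · intro m f hbf
    set A : Matrix (Fin m) (Fin m) ℤ := Matrix.of fun i j => assocMatrix po (f i) (f j) with hA
    set B : Matrix (Fin m) (Fin m) ℤ := Matrix.of fun i j => assocMatrix po (f i) (σ (f j)) with hB
    let e : (Fin m ⊕ Fin m) ≃ Fin n := Equiv.ofBijective _ hbf
    have hsub : (assocMatrix po).submatrix e e = Matrix.fromBlocks A B B A := by
      ext x y
      cases x with
      | inl i =>
        cases y with
        | inl j => simp [e, Equiv.ofBijective, A, Matrix.fromBlocks]
        | inr j => simp [e, Equiv.ofBijective, B, Matrix.fromBlocks]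
      | inr i =>
        cases y with
        | inl j =>
          simp only [Matrix.submatrix_apply, Matrix.fromBlocks_apply₂₁, e,
            Equiv.ofBijective_apply, Sum.elim_inr, Sum.elim_inl]
          calc assocMatrix po (σ (f i)) (f j)
              = assocMatrix po (σ (f i)) (σ (σ (f j))) := by rw [hσσ]
            _ = assocMatrix po (f i) (σ (f j)) := hM _ _
            _ = B i j := rfl
        | inr j =>
          simp only [Matrix.submatrix_apply, Matrix.fromBlocks_apply₂₂, e,
            Equiv.ofBijective_apply, Sum.elim_inr]
          calc assocMatrix po (σ (f i)) (σ (f j)) = assocMatrix po (f i) (f j) := hM _ _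
            _ = A i j := rfl
    have hdet : (assocMatrix po).det = (Matrix.fromBlocks A B B A).det := by
      rw [← hsub, Matrix.det_submatrix_equiv_self]
    rw [hdet, detblock]
    congr 1 <;> ext i j <;> simp [A, B]
end
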